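/- arXiv:math/0606596 — 4 statements merged into one kernel-verified Lean document; each statement's English description precedes it below -/
import Mathlib

section
/- Let 2 ≤ s < ∞. There exists a constant C ≥ 1 depending only on s such that for every probability space (Ω, μ), every n ≥ 1, and every independent family g_1, …, g_n of random variables in L_s(Ω, μ), one has C^{-1} [ (Σ_{k=1}^n ‖g_k‖_{L_s}^s)^{1/s} + (Σ_{k=1}^n ‖g_k‖_{L_2}^2)^{1/2} ] ≤ ( ∫_Ω (Σ_{k=1}^n g_k^2)^{s/2} dμ )^{1/s} ≤ C [ (Σ_{k=1}^n ‖g_k‖_{L_s}^s)^{1/s} + (Σ_{k=1}^n ‖g_k‖_{L_2}^2)^{1/2} ]. -/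
open MeasureTheory ProbabilityTheory Real BigOperators
open scoped ENNReal NNReal

namespace RosenthalAux

variable {Ω : Type} [MeasurableSpace Ω]

/-- `a * a ^ (p - 1) = a ^ p` for finite `a` and `1 ≤ p`. -/
lemma mul_rpow_sub_one {a : ℝ≥0∞} (ha : a ≠ ∞) {p : ℝ} (hp : 1 ≤ p) :
    a * a ^ (p - 1) = a ^ p := by
  rcases eq_or_ne a 0 with rfl | ha0
  · rcases eq_or_lt_of_le hp with h | h
    · simp [← h]
    · rw [ENNReal.zero_rpow_of_pos (by linarith), ENNReal.zero_rpow_of_pos (by linarith),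
        mul_zero]
  · have h : a ^ p = a ^ ((1 : ℝ) + (p - 1)) := by ring_nf
    rw [h, ENNReal.rpow_add _ _ ha0 ha, ENNReal.rpow_one]

/-- `(a + b) ^ q ≤ 2 ^ q * (a ^ q + b ^ q)` in `ℝ≥0∞` for `q ≥ 0`. -/
lemma add_rpow_le {a b : ℝ≥0∞} {q : ℝ} (hq : 0 ≤ q) :
    (a + b) ^ q ≤ 2 ^ q * (a ^ q + b ^ q) := by
  have h1 : a + b ≤ 2 * (a ⊔ b) := by
    rw [two_mul]; exact add_le_add le_sup_left le_sup_right
  calc (a + b) ^ q ≤ (2 * (a ⊔ b)) ^ q := ENNReal.rpow_le_rpow h1 hq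
    _ = 2 ^ q * (a ⊔ b) ^ q := ENNReal.mul_rpow_of_nonneg _ _ hq
    _ ≤ 2 ^ q * (a ^ q + b ^ q) := by
        apply mul_le_mul_right
        rcases le_total a b with h | h
        · rw [sup_eq_right.2 h]; exact le_add_self
        · rw [sup_eq_left.2 h]; exact le_self_add

/-- Sum of `rpow`s is at most the `rpow` of the sum, `p ≥ 1`. -/
lemma sum_rpow_le_rpow_sum {ι : Type*} (t : Finset ι) (f : ι → ℝ≥0∞) {p : ℝ} (hp : 1 ≤ p) :
    ∑ i ∈ t, f i ^ p ≤ (∑ i ∈ t, f i) ^ p := by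
  classical
  induction t using Finset.induction with
  | empty => simp
  | @insert a t ha ih =>
      rw [Finset.sum_insert ha, Finset.sum_insert ha]
      calc f a ^ p + ∑ i ∈ t, f i ^ p ≤ f a ^ p + (∑ i ∈ t, f i) ^ p := by
            exact add_le_add_right ih _
        _ ≤ (f a + ∑ i ∈ t, f i) ^ p := ENNReal.add_rpow_le_rpow_add _ _ hp

/-- Jensen/Hölder on a probability space: `∫⁻ f ≤ (∫⁻ f ^ t) ^ (1/t)` for `t > 1`. -/
lemma lintegral_le_rpow_lintegral_rpow {μ : Measure Ω} [IsProbabilityMeasure μ]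
    {f : Ω → ℝ≥0∞} (hf : Measurable f) {t : ℝ} (ht : 1 < t) :
    ∫⁻ ω, f ω ∂μ ≤ (∫⁻ ω, f ω ^ t ∂μ) ^ (1 / t) := by
  have hconj : t.HolderConjugate (t / (t - 1)) := Real.HolderConjugate.conjExponent ht
  have h := ENNReal.lintegral_mul_le_Lp_mul_Lq μ hconj hf.aemeasurable
    (aemeasurable_const : AEMeasurable (fun _ : Ω => (1 : ℝ≥0∞)) μ)
  simpa using h

/-- Finiteness of `∫⁻ (∑ Y) ^ p` given finiteness of each `∫⁻ Y ^ p`. -/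
lemma lintegral_rpow_sum_ne_top {μ : Measure Ω} {n : ℕ} {Y : Fin n → Ω → ℝ≥0∞}
    (hmeas : ∀ k, Measurable (Y k)) {p : ℝ} (hp0 : 0 < p)
    (hAk : ∀ k, (∫⁻ ω, Y k ω ^ p ∂μ) ≠ ∞) (t : Finset (Fin n)) :
    (∫⁻ ω, (∑ k ∈ t, Y k ω) ^ p ∂μ) ≠ ∞ := by
  classical
  induction t using Finset.induction with
  | empty => simp [ENNReal.zero_rpow_of_pos hp0]
  | @insert a t ha ih =>
      have hmt : Measurable fun ω => ∑ k ∈ t, Y k ω :=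
        Finset.measurable_sum t fun k _ => hmeas k
      have hpoint : ∀ ω, (∑ k ∈ insert a t, Y k ω) ^ p
          ≤ 2 ^ p * (Y a ω ^ p + (∑ k ∈ t, Y k ω) ^ p) := by
        intro ω
        rw [Finset.sum_insert ha]
        exact add_rpow_le hp0.le
      have hle : (∫⁻ ω, (∑ k ∈ insert a t, Y k ω) ^ p ∂μ)
          ≤ 2 ^ p * ((∫⁻ ω, Y a ω ^ p ∂μ) + ∫⁻ ω, (∑ k ∈ t, Y k ω) ^ p ∂μ) := by
        refine (lintegral_mono hpoint).trans_eq ?_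
        rw [lintegral_const_mul _ (f := fun ω => Y a ω ^ p + (∑ k ∈ t, Y k ω) ^ p) (((hmeas a).pow measurable_const).add
          (hmt.pow measurable_const)),
          lintegral_add_left ((hmeas a).pow measurable_const)]
      exact ne_top_of_le_ne_top
        (ENNReal.mul_ne_top (ENNReal.rpow_ne_top_of_nonneg hp0.le (by norm_num))
          (ENNReal.add_ne_top.2 ⟨hAk a, ih⟩)) hle

/-- Core Rosenthal-type inequality for nonnegative independent `ℝ≥0∞`-valued variables. -/
lemma core {μ : Measure Ω} [IsProbabilityMeasure μ] {n : ℕ}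
    {Y : Fin n → Ω → ℝ≥0∞} (hmeas : ∀ k, Measurable (Y k)) (hfin : ∀ k ω, Y k ω ≠ ∞)
    (hindep : iIndepFun Y μ) {p : ℝ} (hp : 1 < p)
    (hAk : ∀ k, (∫⁻ ω, Y k ω ^ p ∂μ) ≠ ∞) :
    (∫⁻ ω, (∑ k, Y k ω) ^ p ∂μ) ≠ ∞ ∧
    (∫⁻ ω, (∑ k, Y k ω) ^ p ∂μ) ^ (1 / p) ≤
      2 ^ p * ((∑ k, ∫⁻ ω, Y k ω ^ p ∂μ) ^ (1 / p) + ∑ k, ∫⁻ ω, Y k ω ∂μ) := by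
  classical
  have hp0 : (0 : ℝ) < p := by linarith
  set S : Ω → ℝ≥0∞ := fun ω => ∑ k, Y k ω with hS_def
  have hSmeas : Measurable S := Finset.measurable_sum _ fun k _ => hmeas k
  have hSfin : ∀ ω, S ω ≠ ∞ := by
    intro ω
    simp only [hS_def]
    exact (ENNReal.sum_lt_top.2 fun k _ => lt_top_iff_ne_top.2 (hfin k ω)).ne
  set M : ℝ≥0∞ := ∫⁻ ω, S ω ^ p ∂μ with hM_def
  set A : ℝ≥0∞ := ∑ k, ∫⁻ ω, Y k ω ^ p ∂μ with hA_def
  set B : ℝ≥0∞ := ∑ k, ∫⁻ ω, Y k ω ∂μ with hB_def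
  have hMfin : M ≠ ∞ := lintegral_rpow_sum_ne_top hmeas hp0 hAk Finset.univ
  refine ⟨hMfin, ?_⟩
  have hA_fin : A ≠ ∞ := by
    rw [hA_def]
    exact (ENNReal.sum_lt_top.2 fun k _ => lt_top_iff_ne_top.2 (hAk k)).ne
  -- the measurable function `S ^ (p-1)`
  have hSp1meas : Measurable fun ω => S ω ^ (p - 1) := hSmeas.pow measurable_const
  set L : ℝ≥0∞ := ∫⁻ ω, S ω ^ (p - 1) ∂μ with hL_def
  -- Step 1: `M = ∑ k, ∫⁻ Y k * S ^ (p-1)`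
  have hstep1 : M = ∑ k, ∫⁻ ω, Y k ω * S ω ^ (p - 1) ∂μ := by
    rw [hM_def]
    have : ∀ ω, S ω ^ p = ∑ k, Y k ω * S ω ^ (p - 1) := by
      intro ω
      rw [← mul_rpow_sub_one (hSfin ω) hp.le]
      simp only [hS_def]
      rw [Finset.sum_mul]
    rw [lintegral_congr this]
    exact lintegral_finset_sum _ fun k _ => (hmeas k).mul hSp1meas
  -- Step 2: bound each term
  have hstep2 : ∀ k, (∫⁻ ω, Y k ω * S ω ^ (p - 1) ∂μ)
      ≤ 2 ^ (p - 1) * ((∫⁻ ω, Y k ω ^ p ∂μ) + (∫⁻ ω, Y k ω ∂μ) * L) := by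
    intro k
    set T : Ω → ℝ≥0∞ := fun ω => ∑ j ∈ Finset.univ.erase k, Y j ω with hT_def
    have hTmeas : Measurable T := Finset.measurable_sum _ fun j _ => hmeas j
    have hTp1meas : Measurable fun ω => T ω ^ (p - 1) := hTmeas.pow measurable_const
    have hpt : ∀ ω, Y k ω * S ω ^ (p - 1)
        ≤ 2 ^ (p - 1) * (Y k ω ^ p + Y k ω * T ω ^ (p - 1)) := by
      intro ω
      have hST : S ω = Y k ω + T ω := by
        simp only [hS_def, hT_def]
        exact (Finset.add_sum_erase Finset.univ (fun j => Y j ω) (Finset.mem_univ k)).symm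
      calc Y k ω * S ω ^ (p - 1) = Y k ω * (Y k ω + T ω) ^ (p - 1) := by rw [hST]
        _ ≤ Y k ω * (2 ^ (p - 1) * (Y k ω ^ (p - 1) + T ω ^ (p - 1))) :=
            mul_le_mul_right (add_rpow_le (by linarith)) _
        _ = 2 ^ (p - 1) * (Y k ω * Y k ω ^ (p - 1) + Y k ω * T ω ^ (p - 1)) := by ring
        _ = 2 ^ (p - 1) * (Y k ω ^ p + Y k ω * T ω ^ (p - 1)) := by
            rw [mul_rpow_sub_one (hfin k ω) hp.le]
    have hint : (∫⁻ ω, Y k ω * S ω ^ (p - 1) ∂μ)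
        ≤ 2 ^ (p - 1) * ((∫⁻ ω, Y k ω ^ p ∂μ) + ∫⁻ ω, Y k ω * T ω ^ (p - 1) ∂μ) := by
      refine (lintegral_mono hpt).trans_eq ?_
      rw [lintegral_const_mul _ (f := fun ω => Y k ω ^ p + Y k ω * T ω ^ (p - 1)) (((hmeas k).pow measurable_const).add
        ((hmeas k).mul hTp1meas)),
        lintegral_add_left ((hmeas k).pow measurable_const)]
    refine hint.trans ?_
    apply mul_le_mul_right
    apply add_le_add_right
    -- independence: `∫⁻ Y k * T ^ (p-1) = ∫⁻ Y k * ∫⁻ T ^ (p-1) ≤ ∫⁻ Y k * L`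
    have hindkT : IndepFun (Y k) (fun ω => T ω ^ (p - 1)) μ := by
      have h1 : IndepFun (∑ j ∈ Finset.univ.erase k, Y j) (Y k) μ :=
        hindep.indepFun_finsetSum_of_notMem hmeas (Finset.notMem_erase k Finset.univ)
      have h2 := h1.symm.comp (measurable_id : Measurable fun x : ℝ≥0∞ => x)
        ((measurable_id.pow measurable_const) : Measurable fun x : ℝ≥0∞ => x ^ (p - 1))
      have hTeq : (fun ω => T ω ^ (p - 1))
          = (fun x : ℝ≥0∞ => x ^ (p - 1)) ∘ (∑ j ∈ Finset.univ.erase k, Y j) := by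
        funext ω
        simp only [Function.comp_apply, hT_def, Finset.sum_apply]
      rw [hTeq]
      exact h2
    have hmul : (∫⁻ ω, Y k ω * T ω ^ (p - 1) ∂μ)
        = (∫⁻ ω, Y k ω ∂μ) * ∫⁻ ω, T ω ^ (p - 1) ∂μ := by
      have := lintegral_mul_eq_lintegral_mul_lintegral_of_indepFun (μ := μ)
        (hmeas k) hTp1meas hindkT
      simpa [Pi.mul_apply] using this
    rw [hmul]
    apply mul_le_mul_right
    refine lintegral_mono fun ω => ENNReal.rpow_le_rpow ?_ (by linarith)
    simp only [hT_def, hS_def]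
    exact Finset.sum_le_sum_of_subset (Finset.subset_univ _)
  -- Combine: `M ≤ 2^(p-1) * (A + B * L)`
  have hcomb : M ≤ 2 ^ (p - 1) * (A + B * L) := by
    rw [hstep1]
    calc ∑ k, ∫⁻ ω, Y k ω * S ω ^ (p - 1) ∂μ
        ≤ ∑ k, 2 ^ (p - 1) * ((∫⁻ ω, Y k ω ^ p ∂μ) + (∫⁻ ω, Y k ω ∂μ) * L) :=
          Finset.sum_le_sum fun k _ => hstep2 k
      _ = 2 ^ (p - 1) * (A + B * L) := by
          rw [← Finset.mul_sum, Finset.sum_add_distrib, ← Finset.sum_mul, hA_def, hB_def]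
  -- Hölder: `L ≤ M ^ ((p-1)/p)`
  have hol : L ≤ M ^ ((p - 1) / p) := by
    have ht1 : (1 : ℝ) < p / (p - 1) := by
      rw [lt_div_iff₀ (by linarith)]
      linarith
    have h := lintegral_le_rpow_lintegral_rpow (μ := μ) hSp1meas ht1
    have heq : ∀ ω, (S ω ^ (p - 1)) ^ (p / (p - 1)) = S ω ^ p := by
      intro ω
      rw [← ENNReal.rpow_mul]
      congr 1
      rw [mul_comm]
      exact div_mul_cancel₀ p (by linarith : p - 1 ≠ 0)
    have heq2 : (∫⁻ ω, (S ω ^ (p - 1)) ^ (p / (p - 1)) ∂μ) = M := by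
      rw [hM_def]; exact lintegral_congr heq
    rw [heq2] at h
    have : (1 : ℝ) / (p / (p - 1)) = (p - 1) / p := by
      field_simp
    rwa [this] at h
  have hfinal : M ≤ 2 ^ (p - 1) * (A + B * M ^ ((p - 1) / p)) :=
    hcomb.trans (mul_le_mul_right (add_le_add_right (mul_le_mul_right hol _) _) _)
  -- Algebra: conclude `M^(1/p) ≤ 2^p * (A^(1/p) + B)`
  rcases eq_or_ne M 0 with hM0 | hM0
  · rw [hM0, ENNReal.zero_rpow_of_pos (one_div_pos.2 hp0)]
    exact zero_le
  have h2p : (2 : ℝ≥0∞) ^ (p - 1) * 2 = 2 ^ p := by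
    have : (2 : ℝ≥0∞) ^ p = 2 ^ ((p - 1) + 1) := by ring_nf
    rw [this, ENNReal.rpow_add _ _ (by norm_num) (by norm_num), ENNReal.rpow_one]
  rcases le_total A (B * M ^ ((p - 1) / p)) with hcase | hcase
  · -- `M ≤ 2^p * B * M^((p-1)/p)`, cancel
    have hM1 : M ≤ 2 ^ p * (B * M ^ ((p - 1) / p)) := by
      calc M ≤ 2 ^ (p - 1) * (A + B * M ^ ((p - 1) / p)) := hfinal
        _ ≤ 2 ^ (p - 1) * (B * M ^ ((p - 1) / p) + B * M ^ ((p - 1) / p)) :=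
            mul_le_mul_right (add_le_add_left hcase _) _
        _ = 2 ^ (p - 1) * 2 * (B * M ^ ((p - 1) / p)) := by ring
        _ = 2 ^ p * (B * M ^ ((p - 1) / p)) := by rw [h2p]
    have hMsplit : M = M ^ (1 / p) * M ^ ((p - 1) / p) := by
      rw [← ENNReal.rpow_add _ _ hM0 hMfin]
      have : 1 / p + (p - 1) / p = 1 := by field_simp; ring
      rw [this, ENNReal.rpow_one]
    have hcancel : M ^ (1 / p) ≤ 2 ^ p * B := by
      have hc0 : M ^ ((p - 1) / p) ≠ 0 := by
        simp [ENNReal.rpow_eq_zero_iff, hM0, hMfin]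
      have hct : M ^ ((p - 1) / p) ≠ ∞ :=
        ENNReal.rpow_ne_top_of_nonneg (div_nonneg (by linarith) (by linarith)) hMfin
      rw [← ENNReal.mul_le_mul_iff_left hc0 hct, ← hMsplit]
      calc M ≤ 2 ^ p * (B * M ^ ((p - 1) / p)) := hM1
        _ = 2 ^ p * B * M ^ ((p - 1) / p) := by ring
    exact hcancel.trans (mul_le_mul_right le_add_self _)
  · -- `M ≤ 2^p * A`
    have hM1 : M ≤ 2 ^ p * A := by
      calc M ≤ 2 ^ (p - 1) * (A + B * M ^ ((p - 1) / p)) := hfinal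
        _ ≤ 2 ^ (p - 1) * (A + A) := mul_le_mul_right (add_le_add_right hcase _) _
        _ = 2 ^ (p - 1) * 2 * A := by ring
        _ = 2 ^ p * A := by rw [h2p]
    have : M ^ (1 / p) ≤ (2 ^ p * A) ^ (1 / p) :=
      ENNReal.rpow_le_rpow hM1 (one_div_pos.2 hp0).le
    refine this.trans ?_
    rw [ENNReal.mul_rpow_of_nonneg _ _ (one_div_pos.2 hp0).le,
      ← ENNReal.rpow_mul]
    have hpp : p * (1 / p) = 1 := by field_simp
    rw [hpp, ENNReal.rpow_one]
    calc (2 : ℝ≥0∞) * A ^ (1 / p) ≤ 2 ^ p * A ^ (1 / p) := by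
          apply mul_le_mul_left
          calc (2 : ℝ≥0∞) = 2 ^ (1 : ℝ) := (ENNReal.rpow_one 2).symm
            _ ≤ 2 ^ p := ENNReal.rpow_le_rpow_of_exponent_le (by norm_num) hp.le
      _ ≤ 2 ^ p * (A ^ (1 / p) + B) := mul_le_mul_right le_self_add _

/-- `x ^ 2 ≤ 1 + |x| ^ s` for `2 ≤ s`. -/
lemma sq_le_one_add_rpow {s : ℝ} (hs : 2 ≤ s) (x : ℝ) : x ^ 2 ≤ 1 + |x| ^ s := by
  have habs : x ^ 2 = |x| ^ (2 : ℝ) := by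
    rw [← sq_abs, ← Real.rpow_natCast |x| 2]
    norm_num
  rcases le_total |x| 1 with h | h
  · have h1 : x ^ 2 ≤ 1 := by
      rw [habs]
      exact Real.rpow_le_one (abs_nonneg x) h (by norm_num)
    have h2 : (0 : ℝ) ≤ |x| ^ s := Real.rpow_nonneg (abs_nonneg x) s
    linarith
  · have h1 : |x| ^ (2 : ℝ) ≤ |x| ^ s := Real.rpow_le_rpow_of_exponent_le h hs
    rw [habs]
    linarith

end RosenthalAux

open RosenthalAux

/-- **Rosenthal's inequality in square-function form (Sp2)**: for `2 ≤ s < ∞` there is a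
constant `C`, depending only on `s`, such that for every probability space and every independent
family `g₁, …, gₙ` in `L_s`, one has
`(∫ (Σ g_k²)^{s/2})^{1/s} ≈ (Σ ‖g_k‖_s^s)^{1/s} + (Σ ‖g_k‖_2²)^{1/2}`. -/
theorem stmt_1 (s : ℝ) (hs : 2 ≤ s) :
    ∃ C : ℝ, 1 ≤ C ∧
      ∀ (Ω : Type) (_ : MeasurableSpace Ω) (μ : Measure Ω), IsProbabilityMeasure μ →
        ∀ (n : ℕ), 1 ≤ n →
          ∀ g : Fin n → Ω → ℝ,
            (∀ k, Measurable (g k)) →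
            (∀ k, Integrable (fun ω => |g k ω| ^ s) μ) →
            iIndepFun g μ →
            C⁻¹ * ((∑ k, ∫ ω, |g k ω| ^ s ∂μ) ^ (1 / s)
                  + (∑ k, ∫ ω, (g k ω) ^ 2 ∂μ) ^ (1 / 2 : ℝ))
                ≤ (∫ ω, (∑ k, (g k ω) ^ 2) ^ (s / 2) ∂μ) ^ (1 / s) ∧
              (∫ ω, (∑ k, (g k ω) ^ 2) ^ (s / 2) ∂μ) ^ (1 / s)
                ≤ C * ((∑ k, ∫ ω, |g k ω| ^ s ∂μ) ^ (1 / s)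
                  + (∑ k, ∫ ω, (g k ω) ^ 2 ∂μ) ^ (1 / 2 : ℝ)) := by
  rcases eq_or_lt_of_le hs with hseq | hslt
  · -- the case `s = 2`
    refine ⟨4, by norm_num, ?_⟩
    intro Ω mΩ μ hμ n hn g hg hint hindep
    subst hseq
    have habs : ∀ k ω, |g k ω| ^ (2 : ℝ) = g k ω ^ 2 := by
      intro k ω
      rw [← sq_abs, ← Real.rpow_natCast |g k ω| 2]
      norm_num
    have hint2 : ∀ k, Integrable (fun ω => g k ω ^ 2) μ := by
      intro k
      have := hint k
      simpa only [habs] using this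
    have hdiv : (2 : ℝ) / 2 = 1 := by norm_num
    simp only [habs, hdiv, Real.rpow_one]
    have hsum : ∫ ω, ∑ k, g k ω ^ 2 ∂μ = ∑ k, ∫ ω, g k ω ^ 2 ∂μ :=
      integral_finset_sum _ fun k _ => hint2 k
    rw [hsum]
    set b := ∑ k, ∫ ω, g k ω ^ 2 ∂μ with hb_def
    have hb : 0 ≤ b := Finset.sum_nonneg fun k _ => integral_nonneg fun ω => sq_nonneg _
    have hb2 : 0 ≤ b ^ ((1 : ℝ) / 2) := Real.rpow_nonneg hb _
    constructor
    · have : (4 : ℝ)⁻¹ * (b ^ ((1:ℝ)/2) + b ^ ((1:ℝ)/2)) = b ^ ((1:ℝ)/2) / 2 := by ring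
      rw [this]
      linarith
    · nlinarith
  · -- the case `s > 2`
    refine ⟨2 ^ s, Real.one_le_rpow (by norm_num) (by linarith), ?_⟩
    intro Ω mΩ μ hμ n hn g hg hint hindep
    set p : ℝ := s / 2 with hp_def
    have hp : 1 < p := by rw [hp_def]; linarith
    have hp0 : (0 : ℝ) < p := by linarith
    have hs0 : (0 : ℝ) < s := by linarith
    -- the `ℝ≥0∞`-valued squares
    set Y : Fin n → Ω → ℝ≥0∞ := fun k ω => ENNReal.ofReal (g k ω ^ 2) with hY_def
    have hYmeas : ∀ k, Measurable (Y k) := fun k => ((hg k).pow_const 2).ennreal_ofReal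
    have hYfin : ∀ k ω, Y k ω ≠ ∞ := fun k ω => ENNReal.ofReal_ne_top
    have hYindep : iIndepFun Y μ := by
      have := hindep.comp (fun _ => fun x : ℝ => ENNReal.ofReal (x ^ 2))
        (fun _ => (measurable_id.pow_const 2).ennreal_ofReal)
      exact this
    set S : Ω → ℝ≥0∞ := fun ω => ∑ k, Y k ω with hS_def
    have hSmeas : Measurable S := Finset.measurable_sum _ fun k _ => hYmeas k
    have hSofReal : ∀ ω, S ω = ENNReal.ofReal (∑ k, g k ω ^ 2) := fun ω =>
      (ENNReal.ofReal_sum_of_nonneg fun k _ => sq_nonneg _).symm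
    -- pointwise identities
    have hYp : ∀ k ω, Y k ω ^ p = ENNReal.ofReal (|g k ω| ^ s) := by
      intro k ω
      rw [hY_def]
      rw [ENNReal.ofReal_rpow_of_nonneg (sq_nonneg _) hp0.le]
      congr 1
      rw [← sq_abs, ← Real.rpow_natCast |g k ω| 2, ← Real.rpow_mul (abs_nonneg _)]
      congr 1
      push_cast
      rw [hp_def]
      ring
    have hSp : ∀ ω, S ω ^ p = ENNReal.ofReal ((∑ k, g k ω ^ 2) ^ (s / 2)) := by
      intro ω
      rw [hSofReal ω, ENNReal.ofReal_rpow_of_nonneg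
        (Finset.sum_nonneg fun k _ => sq_nonneg _) hp0.le, hp_def]
    -- integral conversions
    have hmeas_abs : ∀ k, Measurable fun ω => |g k ω| ^ s := fun k =>
      (hg k).abs.pow measurable_const
    have hconv1 : ∀ k, ∫ ω, |g k ω| ^ s ∂μ = (∫⁻ ω, Y k ω ^ p ∂μ).toReal := by
      intro k
      rw [integral_eq_lintegral_of_nonneg_ae
        (ae_of_all _ fun ω => Real.rpow_nonneg (abs_nonneg _) s)
        (hmeas_abs k).aestronglyMeasurable]
      congr 1
      exact lintegral_congr fun ω => (hYp k ω).symm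
    have hconv2 : ∀ k, ∫ ω, g k ω ^ 2 ∂μ = (∫⁻ ω, Y k ω ∂μ).toReal := by
      intro k
      rw [integral_eq_lintegral_of_nonneg_ae (ae_of_all _ fun ω => sq_nonneg _)
        ((hg k).pow_const 2).aestronglyMeasurable]
    have hconv3 : ∫ ω, (∑ k, g k ω ^ 2) ^ (s / 2) ∂μ = (∫⁻ ω, S ω ^ p ∂μ).toReal := by
      rw [integral_eq_lintegral_of_nonneg_ae
        (ae_of_all _ fun ω => Real.rpow_nonneg
          (Finset.sum_nonneg fun k _ => sq_nonneg _) _)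
        ((Finset.measurable_sum _ fun k _ => (hg k).pow_const 2).pow
          measurable_const).aestronglyMeasurable]
      congr 1
      exact lintegral_congr fun ω => (hSp ω).symm
    -- finiteness
    have hAk : ∀ k, (∫⁻ ω, Y k ω ^ p ∂μ) ≠ ∞ := by
      intro k
      have h := (hint k).2
      rw [hasFiniteIntegral_iff_ofReal
        (ae_of_all _ fun ω => Real.rpow_nonneg (abs_nonneg _) s)] at h
      have : (∫⁻ ω, Y k ω ^ p ∂μ) = ∫⁻ ω, ENNReal.ofReal (|g k ω| ^ s) ∂μ :=
        lintegral_congr fun ω => hYp k ω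
      rw [this]
      exact h.ne
    have hBk : ∀ k, (∫⁻ ω, Y k ω ∂μ) ≠ ∞ := by
      intro k
      have hpt : ∀ ω, Y k ω ≤ 1 + ENNReal.ofReal (|g k ω| ^ s) := by
        intro ω
        rw [hY_def]
        calc ENNReal.ofReal (g k ω ^ 2) ≤ ENNReal.ofReal (1 + |g k ω| ^ s) :=
              ENNReal.ofReal_le_ofReal (sq_le_one_add_rpow hslt.le _)
          _ = ENNReal.ofReal 1 + ENNReal.ofReal (|g k ω| ^ s) :=
              ENNReal.ofReal_add (by norm_num) (Real.rpow_nonneg (abs_nonneg _) s)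
          _ = 1 + ENNReal.ofReal (|g k ω| ^ s) := by rw [ENNReal.ofReal_one]
      have h := (hint k).2
      rw [hasFiniteIntegral_iff_ofReal
        (ae_of_all _ fun ω => Real.rpow_nonneg (abs_nonneg _) s)] at h
      have hle : (∫⁻ ω, Y k ω ∂μ) ≤ 1 + ∫⁻ ω, ENNReal.ofReal (|g k ω| ^ s) ∂μ := by
        calc (∫⁻ ω, Y k ω ∂μ) ≤ ∫⁻ ω, 1 + ENNReal.ofReal (|g k ω| ^ s) ∂μ :=
              lintegral_mono hpt
          _ = 1 + ∫⁻ ω, ENNReal.ofReal (|g k ω| ^ s) ∂μ := by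
              rw [lintegral_add_left measurable_const, lintegral_one, measure_univ]
      exact ne_top_of_le_ne_top (ENNReal.add_ne_top.2 ⟨by norm_num, h.ne⟩) hle
    set A : ℝ≥0∞ := ∑ k, ∫⁻ ω, Y k ω ^ p ∂μ with hA_def
    set B : ℝ≥0∞ := ∑ k, ∫⁻ ω, Y k ω ∂μ with hB_def
    set M : ℝ≥0∞ := ∫⁻ ω, S ω ^ p ∂μ with hM_def
    have hA_fin : A ≠ ∞ := by
      rw [hA_def]
      exact (ENNReal.sum_lt_top.2 fun k _ => lt_top_iff_ne_top.2 (hAk k)).ne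
    have hB_fin : B ≠ ∞ := by
      rw [hB_def]
      exact (ENNReal.sum_lt_top.2 fun k _ => lt_top_iff_ne_top.2 (hBk k)).ne
    obtain ⟨hMfin, hMle⟩ := core hYmeas hYfin hYindep hp hAk
    -- lower bounds in `ℝ≥0∞`
    have hAM : A ≤ M := by
      rw [hA_def, hM_def]
      rw [← lintegral_finset_sum _ fun k _ => (hYmeas k).pow measurable_const]
      exact lintegral_mono fun ω => sum_rpow_le_rpow_sum _ _ hp.le
    have hBM : B ≤ M ^ (1 / p) := by
      rw [hB_def, hM_def]
      rw [← lintegral_finset_sum _ fun k _ => hYmeas k]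
      exact lintegral_le_rpow_lintegral_rpow hSmeas hp
    -- real-side quantities
    have hRA : (∑ k, ∫ ω, |g k ω| ^ s ∂μ) = A.toReal := by
      rw [hA_def, ENNReal.toReal_sum fun k _ => hAk k]
      exact Finset.sum_congr rfl fun k _ => hconv1 k
    have hRB : (∑ k, ∫ ω, g k ω ^ 2 ∂μ) = B.toReal := by
      rw [hB_def, ENNReal.toReal_sum fun k _ => hBk k]
      exact Finset.sum_congr rfl fun k _ => hconv2 k
    have hRX : (∫ ω, (∑ k, g k ω ^ 2) ^ (s / 2) ∂μ) = M.toReal := hconv3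
    rw [hRA, hRB, hRX]
    have hps : (1 / p) * (1 / 2) = 1 / s := by
      rw [hp_def]; field_simp
    have hXeq : M.toReal ^ (1 / s) = ((M ^ (1 / p)) ^ ((1:ℝ) / 2)).toReal := by
      rw [← ENNReal.rpow_mul, hps, ENNReal.toReal_rpow]
    constructor
    · -- lower bound
      have ha : A.toReal ^ (1 / s) ≤ M.toReal ^ (1 / s) :=
        Real.rpow_le_rpow ENNReal.toReal_nonneg (ENNReal.toReal_mono hMfin hAM)
          (le_of_lt (one_div_pos.2 hs0))
      have hb : B.toReal ^ ((1:ℝ) / 2) ≤ M.toReal ^ (1 / s) := by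
        rw [hXeq]
        rw [← ENNReal.toReal_rpow]
        refine Real.rpow_le_rpow ENNReal.toReal_nonneg ?_ (by norm_num)
        exact ENNReal.toReal_mono (ENNReal.rpow_ne_top_of_nonneg (by positivity) hMfin) hBM
      have hX0 : 0 ≤ M.toReal ^ (1 / s) := Real.rpow_nonneg ENNReal.toReal_nonneg _
      have hC2 : (2 : ℝ) ≤ 2 ^ s := by
        calc (2 : ℝ) = 2 ^ (1 : ℝ) := (Real.rpow_one 2).symm
          _ ≤ 2 ^ s := Real.rpow_le_rpow_of_exponent_le (by norm_num) (by linarith)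
      have hCpos : (0 : ℝ) < 2 ^ s := by positivity
      rw [inv_mul_le_iff₀ hCpos]
      calc A.toReal ^ (1 / s) + B.toReal ^ ((1:ℝ) / 2)
          ≤ M.toReal ^ (1 / s) + M.toReal ^ (1 / s) := add_le_add ha hb
        _ = 2 * M.toReal ^ (1 / s) := by ring
        _ ≤ 2 ^ s * M.toReal ^ (1 / s) := mul_le_mul_of_nonneg_right hC2 hX0
        _ = 2 ^ s * (M.toReal ^ (1 / s)) := rfl
    · -- upper bound
      have hENN : M ^ ((1:ℝ) / s) ≤ (2 : ℝ≥0∞) ^ s * (A ^ ((1:ℝ) / s) + B ^ ((1:ℝ) / 2)) := by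
        have h1 : M ^ ((1:ℝ) / s) = (M ^ (1 / p)) ^ ((1:ℝ) / 2) := by
          rw [← ENNReal.rpow_mul, hps]
        rw [h1]
        calc (M ^ (1 / p)) ^ ((1:ℝ) / 2)
            ≤ (2 ^ p * (A ^ (1 / p) + B)) ^ ((1:ℝ) / 2) :=
              ENNReal.rpow_le_rpow hMle (by norm_num)
          _ = (2 ^ p) ^ ((1:ℝ) / 2) * (A ^ (1 / p) + B) ^ ((1:ℝ) / 2) :=
              ENNReal.mul_rpow_of_nonneg _ _ (by norm_num)
          _ ≤ (2 ^ p) ^ ((1:ℝ) / 2) * ((A ^ (1 / p)) ^ ((1:ℝ) / 2) + B ^ ((1:ℝ) / 2)) :=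
              mul_le_mul_right (ENNReal.rpow_add_le_add_rpow _ _ (by norm_num) (by norm_num)) _
          _ = 2 ^ (p * (1 / 2)) * (A ^ ((1:ℝ) / s) + B ^ ((1:ℝ) / 2)) := by
              rw [← ENNReal.rpow_mul 2 p (1 / 2), ← ENNReal.rpow_mul A (1 / p) (1 / 2), hps]
          _ ≤ 2 ^ s * (A ^ ((1:ℝ) / s) + B ^ ((1:ℝ) / 2)) := by
              apply mul_le_mul_left
              exact ENNReal.rpow_le_rpow_of_exponent_le (by norm_num) (by linarith)
      have hRHSne : (2 : ℝ≥0∞) ^ s * (A ^ ((1:ℝ) / s) + B ^ ((1:ℝ) / 2)) ≠ ∞ :=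
        ENNReal.mul_ne_top (ENNReal.rpow_ne_top_of_nonneg hs0.le (by norm_num))
          (ENNReal.add_ne_top.2
            ⟨ENNReal.rpow_ne_top_of_nonneg (le_of_lt (one_div_pos.2 hs0)) hA_fin,
             ENNReal.rpow_ne_top_of_nonneg (by norm_num) hB_fin⟩)
      have := ENNReal.toReal_mono hRHSne hENN
      rw [ENNReal.toReal_mul, ENNReal.toReal_add
          (ENNReal.rpow_ne_top_of_nonneg (le_of_lt (one_div_pos.2 hs0)) hA_fin)
          (ENNReal.rpow_ne_top_of_nonneg (by norm_num) hB_fin),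
        ← ENNReal.toReal_rpow, ← ENNReal.toReal_rpow, ← ENNReal.toReal_rpow,
        ← ENNReal.toReal_rpow] at this
      have h2 : ((2 : ℝ≥0∞)).toReal = (2 : ℝ) := by simp
      rw [h2] at this
      exact this
end

section
/- Let λ > 0, and let m, s be positive integers with s ≥ λ. Let ν be a probability distribution on ℝ with finite absolute m-th moment and write m_ℓ = ∫ x^ℓ dν(x) for ℓ ≤ m. On some probability space let B_1, …, B_s, ε_1, …, ε_s, X_1, …, X_s be mutually independent random variables, where each B_j is Bernoulli with P(B_j = 1) = λ/s, each ε_j is uniform on {−1, 1}, and each X_j has distribution ν. Then E[ ( Σ_{j=1}^s B_j ε_j X_j )^m ] = Σ_{σ ∈ Π_e(m)} [ s! / ( s^{|σ|} (s − |σ|)! ) ] · λ^{|σ|} · Π_{k=1}^{|σ|} m_{|σ_k|}, where the sum runs over all even partitions σ of {1, …, m} with blocks σ_1, …, σ_{|σ|}. -/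
open MeasureTheory ProbabilityTheory Real BigOperators

/-- `P` is (the set of blocks of) a partition of `{1, …, m}` (i.e. of `Fin m`): all blocks are
nonempty, pairwise disjoint, and cover everything. -/
def IsPartitionFinset (m : ℕ) (P : Finset (Finset (Fin m))) : Prop :=
  (∀ b ∈ P, b.Nonempty) ∧
  (∀ b ∈ P, ∀ b' ∈ P, b ≠ b' → Disjoint b b') ∧
  (∀ i : Fin m, ∃ b ∈ P, i ∈ b)

instance (m : ℕ) (P : Finset (Finset (Fin m))) : Decidable (IsPartitionFinset m P) := by
  unfold IsPartitionFinset; infer_instance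


variable {m s : ℕ}

/-- fiber of `f` over `j` -/
def fib (f : Fin m → Fin s) (j : Fin s) : Finset (Fin m) :=
  Finset.univ.filter (fun i => f i = j)

lemma mem_fib {f : Fin m → Fin s} {j : Fin s} {i : Fin m} : i ∈ fib f j ↔ f i = j := by
  simp [fib]

/-- the partition of `Fin m` induced by `f` -/
def part (f : Fin m → Fin s) : Finset (Finset (Fin m)) :=
  (Finset.univ.image (fib f)).filter (·.Nonempty)

lemma mem_part {f : Fin m → Fin s} {b : Finset (Fin m)} :
    b ∈ part f ↔ (∃ j, fib f j = b) ∧ b.Nonempty := by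
  simp [part]

lemma fib_mem_part {f : Fin m → Fin s} {j : Fin s} (h : (fib f j).Nonempty) :
    fib f j ∈ part f := mem_part.mpr ⟨⟨j, rfl⟩, h⟩

lemma isPartition_part (f : Fin m → Fin s) : IsPartitionFinset m (part f) := by
  refine ⟨fun b hb => (mem_part.1 hb).2, ?_, ?_⟩
  · intro b hb b' hb' hne
    obtain ⟨⟨j, rfl⟩, _⟩ := mem_part.1 hb
    obtain ⟨⟨j', rfl⟩, _⟩ := mem_part.1 hb'
    have : j ≠ j' := fun h => hne (by rw [h])
    rw [Finset.disjoint_left]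
    intro i hi hi'
    exact this ((mem_fib.1 hi).symm.trans (mem_fib.1 hi'))
  · intro i
    exact ⟨fib f (f i), fib_mem_part ⟨i, mem_fib.2 rfl⟩, mem_fib.2 rfl⟩

lemma prod_fib_eq_prod_part (T : ℕ → ℝ) (hT0 : T 0 = 1) (f : Fin m → Fin s) :
    ∏ j : Fin s, T ((fib f j).card) = ∏ b ∈ part f, T b.card := by
  classical
  have h1 : ∏ j : Fin s, T ((fib f j).card)
      = ∏ j ∈ Finset.univ.filter (fun j => (fib f j).Nonempty), T ((fib f j).card) := by
    refine (Finset.prod_subset (Finset.filter_subset _ _) ?_).symm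
    intro j _ hj
    simp only [Finset.mem_filter, Finset.mem_univ, true_and,
      Finset.not_nonempty_iff_eq_empty] at hj
    rw [hj]; simpa using hT0
  rw [h1]
  have h2 : part f = (Finset.univ.filter (fun j => (fib f j).Nonempty)).image (fib f) := by
    rw [part, Finset.filter_image]
  rw [h2, Finset.prod_image]
  intro j hj j' _ hE
  simp only [Finset.mem_coe, Finset.mem_filter] at hj
  obtain ⟨i, hi⟩ := hj.2
  have := mem_fib.1 (hE ▸ hi)
  exact (mem_fib.1 hi).symm.trans this

lemma card_part_eq (P : Finset (Finset (Fin m))) (hP : IsPartitionFinset m P) :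
    (Finset.univ.filter (fun f : Fin m → Fin s => part f = P)).card
      = s.descFactorial P.card := by
  classical
  have hbl : ∀ i : Fin m, ∃ b, b ∈ P ∧ i ∈ b := by
    intro i; obtain ⟨b, hb, hib⟩ := hP.2.2 i; exact ⟨b, hb, hib⟩
  set bl : Fin m → Finset (Fin m) := fun i => (hbl i).choose with hbldef
  have hblP : ∀ i, bl i ∈ P := fun i => (hbl i).choose_spec.1
  have hbli : ∀ i, i ∈ bl i := fun i => (hbl i).choose_spec.2
  have huniq : ∀ (i : Fin m) b, b ∈ P → i ∈ b → b = bl i := by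
    intro i b hb hib
    by_contra hne
    exact (Finset.disjoint_left.mp (hP.2.1 b hb (bl i) (hblP i) hne) hib) (hbli i)
  have hne : ∀ b ∈ P, b.Nonempty := hP.1
  -- key facts about f with part f = P
  have key : ∀ f : Fin m → Fin s, part f = P →
      ∀ (b : Finset (Fin m)), b ∈ P → ∀ i ∈ b, fib f (f i) = b := by
    intro f hf b hb i hib
    have h1 : i ∈ fib f (f i) := mem_fib.2 rfl
    have h2 : fib f (f i) ∈ P := hf ▸ fib_mem_part ⟨i, h1⟩
    by_contra hne'
    exact (Finset.disjoint_left.mp (hP.2.1 _ h2 b hb hne') h1) hib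
  have hconst : ∀ f : Fin m → Fin s, part f = P →
      ∀ b ∈ P, ∀ i1 ∈ b, ∀ i2 ∈ b, f i1 = f i2 := by
    intro f hf b hb i1 h1 i2 h2
    have e1 := key f hf b hb i1 h1
    have : i2 ∈ fib f (f i1) := e1 ▸ h2
    exact (mem_fib.1 this).symm
  have hinj : ∀ f : Fin m → Fin s, part f = P →
      Function.Injective (fun b : {b : Finset (Fin m) // b ∈ P} =>
        f (b.1.min' (hne b.1 b.2))) := by
    intro f hf b b' hEq
    simp only at hEq
    have e1 := key f hf b.1 b.2 _ (b.1.min'_mem (hne b.1 b.2))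
    have e2 := key f hf b'.1 b'.2 _ (b'.1.min'_mem (hne b'.1 b'.2))
    apply Subtype.ext
    rw [← e1, ← e2, hEq]
  have hfib : ∀ (g : {b : Finset (Fin m) // b ∈ P} ↪ Fin s) (b : Finset (Fin m)) (hb : b ∈ P),
      fib (fun i => g ⟨bl i, hblP i⟩) (g ⟨b, hb⟩) = b := by
    intro g b hb
    ext i
    rw [mem_fib]
    constructor
    · intro h
      have : (⟨bl i, hblP i⟩ : {b : Finset (Fin m) // b ∈ P}) = ⟨b, hb⟩ := g.injective h
      have : bl i = b := congrArg Subtype.val this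
      rw [← this]; exact hbli i
    · intro h
      have : b = bl i := huniq i b hb h
      congr 1
      exact Subtype.ext this.symm
  have hback : ∀ g : {b : Finset (Fin m) // b ∈ P} ↪ Fin s,
      part (fun i => g ⟨bl i, hblP i⟩) = P := by
    intro g
    ext b'
    rw [mem_part]
    constructor
    · rintro ⟨⟨j, hj⟩, hne'⟩
      obtain ⟨i, hi⟩ := hne'
      have hij : g ⟨bl i, hblP i⟩ = j := mem_fib.1 (hj ▸ hi)
      rw [← hj, ← hij, hfib g (bl i) (hblP i)]
      exact hblP i
    · intro hb
      exact ⟨⟨g ⟨b', hb⟩, hfib g b' hb⟩, hne b' hb⟩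
  rw [show s.descFactorial P.card
      = Fintype.card ({b : Finset (Fin m) // b ∈ P} ↪ Fin s) by
    rw [Fintype.card_embedding_eq, Fintype.card_coe, Fintype.card_fin]]
  rw [← Finset.card_univ]
  refine Finset.card_bij'
    (fun f hf => ⟨fun b => f (b.1.min' (hne b.1 b.2)),
      hinj f (Finset.mem_filter.1 hf).2⟩)
    (fun g _ => fun i => g ⟨bl i, hblP i⟩)
    (fun f hf => Finset.mem_univ _)
    (fun g hg => Finset.mem_filter.mpr ⟨Finset.mem_univ _, hback g⟩) ?_ ?_
  · intro f hf
    have hfP : part f = P := (Finset.mem_filter.1 hf).2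
    funext i
    simp only [Function.Embedding.coeFn_mk]
    exact hconst f hfP (bl i) (hblP i) _ ((bl i).min'_mem (hne _ (hblP i))) i (hbli i)
  · intro g hg
    apply DFunLike.ext
    intro b
    simp only [Function.Embedding.coeFn_mk]
    congr 1
    exact Subtype.ext (huniq _ b.1 b.2 (b.1.min'_mem (hne b.1 b.2))).symm

lemma comb_sum (T : ℕ → ℝ) (hT0 : T 0 = 1) :
    ∑ f : Fin m → Fin s, ∏ j : Fin s, T ((fib f j).card)
      = ∑ P ∈ Finset.univ.filter
          (fun P : Finset (Finset (Fin m)) => IsPartitionFinset m P),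
          (s.descFactorial P.card : ℝ) * ∏ b ∈ P, T b.card := by
  classical
  rw [← Finset.sum_fiberwise_of_maps_to
    (g := part) (t := Finset.univ.filter (fun P : Finset (Finset (Fin m)) => IsPartitionFinset m P))
    (fun f _ => Finset.mem_filter.mpr ⟨Finset.mem_univ _, isPartition_part f⟩)
    (fun f => ∏ j : Fin s, T ((fib f j).card))]
  refine Finset.sum_congr rfl fun P hP => ?_
  have hPp : IsPartitionFinset m P := (Finset.mem_filter.1 hP).2
  rw [Finset.sum_congr rfl (fun f hf => ?_), Finset.sum_const,
    card_part_eq P hPp, nsmul_eq_mul]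
  rw [prod_fib_eq_prod_part T hT0 f, (Finset.mem_filter.1 hf).2]

lemma integrable_dirac_real {g : ℝ → ℝ} (hg : Measurable g) (x : ℝ) :
    Integrable g (Measure.dirac x) := by
  refine ⟨hg.aestronglyMeasurable, ?_⟩
  simp [HasFiniteIntegral, MeasureTheory.lintegral_dirac]

lemma integrable_two_dirac {g : ℝ → ℝ} (hg : Measurable g) (a b : ENNReal)
    (ha : a ≠ ⊤) (hb : b ≠ ⊤) (x y : ℝ) :
    Integrable g (a • Measure.dirac x + b • Measure.dirac y) :=
  (((integrable_dirac_real hg x).smul_measure ha).add_measure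
    ((integrable_dirac_real hg y).smul_measure hb))

lemma integral_two_dirac (g : ℝ → ℝ) (hg : Measurable g) (a b : ENNReal)
    (ha : a ≠ ⊤) (hb : b ≠ ⊤) (x y : ℝ) :
    ∫ z, g z ∂(a • Measure.dirac x + b • Measure.dirac y)
      = a.toReal * g x + b.toReal * g y := by
  rw [integral_add_measure ((integrable_dirac_real hg x).smul_measure ha)
    ((integrable_dirac_real hg y).smul_measure hb),
    integral_smul_measure, integral_smul_measure, integral_dirac, integral_dirac,
    smul_eq_mul, smul_eq_mul]

lemma indep_integral_prod {ι' : Type*} {Ω : Type} [MeasurableSpace Ω] {μ : Measure Ω}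
    [IsProbabilityMeasure μ] (g : ι' → Ω → ℝ)
    (hindep : iIndepFun g μ)
    (hmeas : ∀ i, Measurable (g i)) (t : Finset ι') (hint : ∀ i ∈ t, Integrable (g i) μ) :
    Integrable (fun ω => ∏ i ∈ t, g i ω) μ ∧
      ∫ ω, ∏ i ∈ t, g i ω ∂μ = ∏ i ∈ t, ∫ ω, g i ω ∂μ := by
  classical
  induction t using Finset.cons_induction with
  | empty => simp
  | cons i t hi ih =>
    obtain ⟨ih1, ih2⟩ := ih (fun j hj => hint j (Finset.mem_cons_of_mem hj))
    have hIndep : IndepFun (∏ j ∈ t, g j) (g i) μ :=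
      hindep.indepFun_finset_prod_of_notMem hmeas hi
    have hprodeq : (∏ j ∈ t, g j) = fun ω => ∏ j ∈ t, g j ω := by
      funext ω; simp [Finset.prod_apply]
    rw [hprodeq] at hIndep
    have hinti : Integrable (g i) μ := hint i (Finset.mem_cons_self i t)
    have hIm : Integrable (fun ω => (∏ j ∈ t, g j ω) * g i ω) μ :=
      hIndep.integrable_mul ih1 hinti
    constructor
    · simp only [Finset.prod_cons]
      have : (fun ω => g i ω * ∏ j ∈ t, g j ω)
          = fun ω => (∏ j ∈ t, g j ω) * g i ω := by funext ω; ring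
      rw [this]; exact hIm
    · simp only [Finset.prod_cons]
      have e1 : ∫ ω, g i ω * ∏ j ∈ t, g j ω ∂μ
          = ∫ ω, (∏ j ∈ t, g j ω) * g i ω ∂μ := by
        congr 1; funext ω; ring
      have e2 : (fun ω => (∏ j ∈ t, g j ω) * g i ω)
          = (fun ω => ∏ j ∈ t, g j ω) * g i := rfl
      rw [e1, e2, IndepFun.integral_mul_eq_mul_integral hIndep ih1.aestronglyMeasurable hinti.aestronglyMeasurable, ih2]
      ring

/-- **Moment formula for Bernoulli-thinned symmetrized sums** (the scalar instance of the moment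
computation in the proof of Theorem 4.8 of the paper): if `B₁, …, B_s, ε₁, …, ε_s, X₁, …, X_s`
are mutually independent with `B_j` Bernoulli of parameter `λ/s`, `ε_j` uniform on `{-1, 1}` and
`X_j` distributed as `ν`, then
`E[(Σ_j B_j ε_j X_j)^m] = Σ_{σ even partition of {1,…,m}} s!/(s^{|σ|}(s-|σ|)!) · λ^{|σ|} ·
Π_k m_{|σ_k|}`, where `m_ℓ = ∫ x^ℓ dν` and `s!/(s-r)!` is the falling factorial
`s(s-1)⋯(s-r+1)`. -/
theorem stmt_4 (lam : ℝ) (hlam : 0 < lam) (m s : ℕ) (hm : 0 < m) (hs0 : 0 < s)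
    (hs : lam ≤ (s : ℝ))
    (ν : Measure ℝ) [IsProbabilityMeasure ν]
    (hmom : Integrable (fun x => |x| ^ m) ν)
    (Ω : Type) [MeasurableSpace Ω] (μ : Measure Ω) [IsProbabilityMeasure μ]
    (B e X : Fin s → Ω → ℝ)
    (hBmeas : ∀ j, Measurable (B j)) (hemeas : ∀ j, Measurable (e j))
    (hXmeas : ∀ j, Measurable (X j))
    (hindep : iIndepFun (Sum.elim B (Sum.elim e X)) μ)
    (hB : ∀ j, Measure.map (B j) μ
      = ENNReal.ofReal (1 - lam / s) • Measure.dirac (0 : ℝ)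
        + ENNReal.ofReal (lam / s) • Measure.dirac (1 : ℝ))
    (he : ∀ j, Measure.map (e j) μ
      = (2 : ENNReal)⁻¹ • Measure.dirac (-1 : ℝ) + (2 : ENNReal)⁻¹ • Measure.dirac (1 : ℝ))
    (hX : ∀ j, Measure.map (X j) μ = ν) :
    ∫ ω, (∑ j, B j ω * e j ω * X j ω) ^ m ∂μ
      = ∑ P ∈ Finset.univ.filter
          (fun P : Finset (Finset (Fin m)) =>
            IsPartitionFinset m P ∧ ∀ b ∈ P, Even b.card),
          ((s.descFactorial P.card : ℝ) / (s : ℝ) ^ P.card) * lam ^ P.card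
            * ∏ b ∈ P, ∫ x, x ^ b.card ∂ν := by
  classical
  set Z := Sum.elim B (Sum.elim e X) with hZdef
  have hZmeas : ∀ k, Measurable (Z k) := by
    rintro (j | j | j)
    exacts [hBmeas j, hemeas j, hXmeas j]
  -- nonnegativity facts
  have hsR : (0:ℝ) < s := by exact_mod_cast hs0
  have hnn2 : 0 ≤ lam / s := div_nonneg hlam.le hsR.le
  have hle1 : lam / s ≤ 1 := (div_le_one hsR).mpr hs
  have hnn1 : 0 ≤ 1 - lam / s := by linarith
  -- marginal moments
  have EB : ∀ (j : Fin s) (c : ℕ),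
      ∫ ω, B j ω ^ c ∂μ = if c = 0 then 1 else lam / s := by
    intro j c
    have hpow : Measurable (fun x : ℝ => x ^ c) := measurable_id.pow_const c
    rw [← integral_map (hBmeas j).aemeasurable hpow.aestronglyMeasurable, hB j,
      integral_two_dirac _ hpow _ _ ENNReal.ofReal_ne_top ENNReal.ofReal_ne_top,
      ENNReal.toReal_ofReal hnn1, ENNReal.toReal_ofReal hnn2]
    rcases Nat.eq_zero_or_pos c with rfl | hc
    · simp
    · rw [if_neg hc.ne', zero_pow hc.ne', one_pow]; ring
  have Ee : ∀ (j : Fin s) (c : ℕ),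
      ∫ ω, e j ω ^ c ∂μ = if Even c then 1 else 0 := by
    intro j c
    have hpow : Measurable (fun x : ℝ => x ^ c) := measurable_id.pow_const c
    rw [← integral_map (hemeas j).aemeasurable hpow.aestronglyMeasurable, he j,
      integral_two_dirac _ hpow _ _ (by simp) (by simp)]
    have h2 : ((2 : ENNReal)⁻¹).toReal = (2 : ℝ)⁻¹ := by
      simp
    rw [h2, one_pow]
    rcases Nat.even_or_odd c with hc | hc
    · rw [if_pos hc, hc.neg_one_pow]; norm_num
    · rw [if_neg (Nat.not_even_iff_odd.mpr hc), hc.neg_one_pow]; ring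
  have EX : ∀ (j : Fin s) (c : ℕ),
      ∫ ω, X j ω ^ c ∂μ = ∫ x, x ^ c ∂ν := by
    intro j c
    have hpow : Measurable (fun x : ℝ => x ^ c) := measurable_id.pow_const c
    rw [← integral_map (hXmeas j).aemeasurable hpow.aestronglyMeasurable, hX j]
  -- integrability
  have hIntν : ∀ c ≤ m, Integrable (fun x : ℝ => x ^ c) ν := by
    intro c hc
    refine ((integrable_const (1:ℝ)).add hmom).mono
      ((measurable_id.pow_const c).aestronglyMeasurable) (ae_of_all _ fun x => ?_)
    simp only [Pi.add_apply, Real.norm_eq_abs, abs_pow]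
    have hb : (0:ℝ) ≤ 1 + |x| ^ m := by positivity
    rw [abs_of_nonneg hb]
    rcases le_total |x| 1 with h | h
    · have h1 : |x| ^ c ≤ 1 := pow_le_one₀ (abs_nonneg x) h
      have h2 : (0:ℝ) ≤ |x| ^ m := by positivity
      linarith
    · have h1 : |x| ^ c ≤ |x| ^ m := pow_le_pow_right₀ h hc
      linarith
  have hIntB : ∀ (j : Fin s) (c : ℕ), Integrable (fun ω => B j ω ^ c) μ := by
    intro j c
    have hpow : Measurable (fun x : ℝ => x ^ c) := measurable_id.pow_const c
    have h := integrable_two_dirac hpow (ENNReal.ofReal (1 - lam / (s:ℝ)))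
      (ENNReal.ofReal (lam / (s:ℝ))) ENNReal.ofReal_ne_top ENNReal.ofReal_ne_top (0:ℝ) (1:ℝ)
    rw [← hB j] at h
    exact (integrable_map_measure hpow.aestronglyMeasurable (hBmeas j).aemeasurable).mp h
  have hInte : ∀ (j : Fin s) (c : ℕ), Integrable (fun ω => e j ω ^ c) μ := by
    intro j c
    have hpow : Measurable (fun x : ℝ => x ^ c) := measurable_id.pow_const c
    have h := integrable_two_dirac hpow ((2:ENNReal)⁻¹) ((2:ENNReal)⁻¹) (by simp) (by simp)
      (-1:ℝ) (1:ℝ)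
    rw [← he j] at h
    exact (integrable_map_measure hpow.aestronglyMeasurable (hemeas j).aemeasurable).mp h
  have hIntX : ∀ (j : Fin s) (c : ℕ), c ≤ m → Integrable (fun ω => X j ω ^ c) μ := by
    intro j c hc
    have hpow : Measurable (fun x : ℝ => x ^ c) := measurable_id.pow_const c
    have h := hIntν c hc
    rw [← hX j] at h
    exact (integrable_map_measure hpow.aestronglyMeasurable (hXmeas j).aemeasurable).mp h
  have hcle : ∀ (f : Fin m → Fin s) (j : Fin s), (fib f j).card ≤ m :=
    fun f j => (Finset.card_le_univ _).trans (by simp)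
  -- the exponent function on the sum type
  set d : (Fin m → Fin s) → (Fin s ⊕ (Fin s ⊕ Fin s)) → ℕ :=
    fun f => Sum.elim (fun j => (fib f j).card)
      (Sum.elim (fun j => (fib f j).card) (fun j => (fib f j).card)) with hddef
  -- pointwise regrouping
  have regroup : ∀ (f : Fin m → Fin s) (ω : Ω),
      ∏ i : Fin m, (B (f i) ω * e (f i) ω * X (f i) ω)
        = ∏ k : Fin s ⊕ (Fin s ⊕ Fin s), Z k ω ^ d f k := by
    intro f ω
    have h1 : ∏ i : Fin m, (B (f i) ω * e (f i) ω * X (f i) ω)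
        = ∏ j : Fin s, (B j ω * e j ω * X j ω) ^ (fib f j).card := by
      rw [← Finset.prod_fiberwise_of_maps_to (g := f) (fun i _ => Finset.mem_univ (f i))
        (fun i => B (f i) ω * e (f i) ω * X (f i) ω)]
      refine Finset.prod_congr rfl fun j _ => ?_
      rw [show (Finset.univ.filter fun i => f i = j) = fib f j from rfl,
        ← Finset.prod_const]
      exact Finset.prod_congr rfl fun i hi => by rw [mem_fib.1 hi]
    rw [h1]
    simp only [hZdef, hddef, Fintype.prod_sum_type, Sum.elim_inl, Sum.elim_inr,
      mul_pow, Finset.prod_mul_distrib]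
    ring
  -- per-f integrability and integral
  have hstep : ∀ f : Fin m → Fin s,
      Integrable (fun ω => ∏ k : Fin s ⊕ (Fin s ⊕ Fin s), Z k ω ^ d f k) μ ∧
      ∫ ω, ∏ k : Fin s ⊕ (Fin s ⊕ Fin s), Z k ω ^ d f k ∂μ
        = ∏ k : Fin s ⊕ (Fin s ⊕ Fin s), ∫ ω, Z k ω ^ d f k ∂μ := by
    intro f
    refine indep_integral_prod _ (hindep.comp (fun k (x : ℝ) => x ^ d f k)
      (fun k => measurable_id.pow_const _)) ?_ _ ?_
    · rintro (j | j | j)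
      exacts [(hBmeas j).pow_const _, (hemeas j).pow_const _, (hXmeas j).pow_const _]
    · rintro (j | j | j) _
      exacts [hIntB j _, hInte j _, hIntX j _ (hcle f j)]
  -- the single-block weight
  set T : ℕ → ℝ := fun c =>
    (if c = 0 then (1:ℝ) else lam / s) * (if Even c then 1 else 0) * ∫ x, x ^ c ∂ν
    with hTdef
  have hT0 : T 0 = 1 := by
    simp [hTdef, integral_const]
  have hprodT : ∀ f : Fin m → Fin s,
      ∏ k : Fin s ⊕ (Fin s ⊕ Fin s), ∫ ω, Z k ω ^ d f k ∂μ
        = ∏ j : Fin s, T ((fib f j).card) := by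
    intro f
    simp only [hZdef, hddef, Fintype.prod_sum_type, Sum.elim_inl, Sum.elim_inr]
    simp only [EB, Ee, EX, hTdef]
    rw [← Finset.prod_mul_distrib, ← Finset.prod_mul_distrib]
    exact Finset.prod_congr rfl fun _ _ => by ring
  -- main computation
  have hexp : ∀ ω : Ω, (∑ j, B j ω * e j ω * X j ω) ^ m
      = ∑ f : Fin m → Fin s, ∏ i : Fin m, (B (f i) ω * e (f i) ω * X (f i) ω) := by
    intro ω
    rw [Finset.sum_pow', Fintype.piFinset_univ]
  calc ∫ ω, (∑ j, B j ω * e j ω * X j ω) ^ m ∂μ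
      = ∫ ω, ∑ f : Fin m → Fin s,
          ∏ k : Fin s ⊕ (Fin s ⊕ Fin s), Z k ω ^ d f k ∂μ := by
        congr 1; funext ω; rw [hexp ω]
        exact Finset.sum_congr rfl fun f _ => regroup f ω
    _ = ∑ f : Fin m → Fin s,
          ∫ ω, ∏ k : Fin s ⊕ (Fin s ⊕ Fin s), Z k ω ^ d f k ∂μ :=
        integral_finset_sum _ (fun f _ => (hstep f).1)
    _ = ∑ f : Fin m → Fin s, ∏ j : Fin s, T ((fib f j).card) :=
        Finset.sum_congr rfl fun f _ => ((hstep f).2).trans (hprodT f)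
    _ = ∑ P ∈ Finset.univ.filter
          (fun P : Finset (Finset (Fin m)) => IsPartitionFinset m P),
          (s.descFactorial P.card : ℝ) * ∏ b ∈ P, T b.card := comb_sum T hT0
    _ = ∑ P ∈ Finset.univ.filter
          (fun P : Finset (Finset (Fin m)) =>
            IsPartitionFinset m P ∧ ∀ b ∈ P, Even b.card),
          (s.descFactorial P.card : ℝ) * ∏ b ∈ P, T b.card := by
        refine (Finset.sum_subset ?_ ?_).symm
        · intro P hP
          simp only [Finset.mem_filter] at hP ⊢
          exact ⟨hP.1, hP.2.1⟩
        · intro P hP1 hP2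
          simp only [Finset.mem_filter, Finset.mem_univ, true_and] at hP1 hP2
          push_neg at hP2
          obtain ⟨b, hb, hodd⟩ := hP2 hP1
          have : T b.card = 0 := by
            simp [hTdef, hodd]
          rw [Finset.prod_eq_zero hb this, mul_zero]
    _ = ∑ P ∈ Finset.univ.filter
          (fun P : Finset (Finset (Fin m)) =>
            IsPartitionFinset m P ∧ ∀ b ∈ P, Even b.card),
          ((s.descFactorial P.card : ℝ) / (s : ℝ) ^ P.card) * lam ^ P.card
            * ∏ b ∈ P, ∫ x, x ^ b.card ∂ν := by
        refine Finset.sum_congr rfl fun P hP => ?_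
        simp only [Finset.mem_filter] at hP
        obtain ⟨-, hPp, heven⟩ := hP
        have hTb : ∀ b ∈ P, T b.card = (lam / s) * ∫ x, x ^ b.card ∂ν := by
          intro b hb
          have h0 : b.card ≠ 0 := by
            simpa [Finset.card_eq_zero] using (hPp.1 b hb).ne_empty
          simp [hTdef, h0, heven b hb]
        rw [Finset.prod_congr rfl hTb, Finset.prod_mul_distrib, Finset.prod_const,
          div_pow]
        ring
end

section
/- Let λ > 0 and m a positive integer. Let ν be a probability distribution on ℝ with finite absolute m-th moment and write m_ℓ = ∫ x^ℓ dν(x) for ℓ ≤ m. Suppose that for each integer s ≥ λ we are given, on some probability space, mutually independent random variables B_1^{(s)}, …, B_s^{(s)}, ε_1^{(s)}, …, ε_s^{(s)}, X_1^{(s)}, …, X_s^{(s)}, where each B_j^{(s)} is Bernoulli with P(B_j^{(s)} = 1) = λ/s, each ε_j^{(s)} is uniform on {−1, 1}, and each X_j^{(s)} has distribution ν. Then lim_{s→∞} E[ ( Σ_{j=1}^s B_j^{(s)} ε_j^{(s)} X_j^{(s)} )^m ] = Σ_{σ ∈ Π_e(m)} λ^{|σ|} · Π_{k=1}^{|σ|}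 m_{|σ_k|}, where the sum runs over all even partitions σ of {1, …, m} with blocks σ_1, …, σ_{|σ|}. -/
open MeasureTheory ProbabilityTheory Real BigOperators Filter

lemma aux_indep_prod {Ω : Type*} [MeasurableSpace Ω] {μ : Measure Ω} [IsProbabilityMeasure μ]
    {ι : Type*} (F : ι → Ω → ℝ) (hmeas : ∀ i, Measurable (F i))
    (hindep : iIndepFun F μ)
    (T : Finset ι) (hint : ∀ i ∈ T, Integrable (F i) μ) :
    Integrable (fun ω => ∏ i ∈ T, F i ω) μ ∧
      (∫ ω, ∏ i ∈ T, F i ω ∂μ) = ∏ i ∈ T, ∫ ω, F i ω ∂μ := by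
  classical
  induction T using Finset.induction_on with
  | empty => simp
  | @insert i T hiT ih =>
    have hintT : ∀ j ∈ T, Integrable (F j) μ := fun j hj => hint j (Finset.mem_insert_of_mem hj)
    obtain ⟨ihI, ihE⟩ := ih hintT
    have hIndep : IndepFun (∏ j ∈ T, F j) (F i) μ :=
      hindep.indepFun_finsetProd_of_notMem hmeas hiT
    have hprodfun : (∏ j ∈ T, F j) = (fun ω => ∏ j ∈ T, F j ω) := by
      funext ω; simp [Finset.prod_apply]
    have hIndep' : IndepFun (fun ω => ∏ j ∈ T, F j ω) (F i) μ := by rwa [hprodfun] at hIndep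
    have hinti : Integrable (F i) μ := hint i (Finset.mem_insert_self i T)
    have hmul : Integrable ((fun ω => ∏ j ∈ T, F j ω) * F i) μ :=
      hIndep'.integrable_mul ihI hinti
    have hE := hIndep'.integral_mul_eq_mul_integral ihI.aestronglyMeasurable hinti.aestronglyMeasurable
    constructor
    · have : (fun ω => ∏ j ∈ insert i T, F j ω)
          = (fun ω => ∏ j ∈ T, F j ω) * F i := by
        funext ω; simp [Finset.prod_insert hiT, mul_comm]
      rw [this]; exact hmul
    · simp only [Finset.prod_insert hiT]
      have h1 : (∫ ω, F i ω * ∏ j ∈ T, F j ω ∂μ)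
          = integral μ ((fun ω => ∏ j ∈ T, F j ω) * F i) := by
        congr 1; funext ω; simp [mul_comm]
      rw [h1, hE, ihE, mul_comm]



def kerf {m s : ℕ} (f : Fin m → Fin s) : Finset (Finset (Fin m)) :=
  (Finset.univ.image f).image (fun j => Finset.univ.filter (fun i => f i = j))

lemma mem_kerf {m s : ℕ} {f : Fin m → Fin s} {b : Finset (Fin m)} :
    b ∈ kerf f ↔ ∃ i : Fin m, b = Finset.univ.filter (fun i' => f i' = f i) := by
  simp only [kerf, Finset.mem_image, Finset.mem_univ, true_and]
  constructor
  · rintro ⟨j, ⟨i, rfl⟩, rfl⟩; exact ⟨i, rfl⟩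
  · rintro ⟨i, rfl⟩; exact ⟨f i, ⟨i, rfl⟩, rfl⟩

lemma kerf_isPartition {m s : ℕ} (f : Fin m → Fin s) : IsPartitionFinset m (kerf f) := by
  refine ⟨?_, ?_, ?_⟩
  · intro b hb; rw [mem_kerf] at hb; obtain ⟨i, rfl⟩ := hb
    exact ⟨i, by simp⟩
  · intro b hb b' hb' hne
    rw [mem_kerf] at hb hb'; obtain ⟨i, rfl⟩ := hb; obtain ⟨i', rfl⟩ := hb'
    rw [Finset.disjoint_left]
    intro a ha ha'
    simp only [Finset.mem_filter, Finset.mem_univ, true_and] at ha ha'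
    exact hne (by rw [← ha, ← ha'])
  · intro i
    exact ⟨_, mem_kerf.mpr ⟨i, rfl⟩, by simp⟩

lemma card_kerf_eq {m s : ℕ} {P : Finset (Finset (Fin m))} (hP : IsPartitionFinset m P) :
    (Finset.univ.filter (fun f : Fin m → Fin s => kerf f = P)).card = s.descFactorial P.card := by
  classical
  obtain ⟨hne, hdisj, hcov⟩ := hP
  have hblk : ∀ i : Fin m, ∃ b, b ∈ P ∧ i ∈ b := by
    intro i; obtain ⟨b, hb, hib⟩ := hcov i; exact ⟨b, hb, hib⟩
  set blk : Fin m → Finset (Fin m) := fun i => (hblk i).choose with hblkdef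
  have hblkP : ∀ i, blk i ∈ P := fun i => (hblk i).choose_spec.1
  have hiblk : ∀ i, i ∈ blk i := fun i => (hblk i).choose_spec.2
  have huniq : ∀ (i : Fin m) (b : Finset (Fin m)), b ∈ P → i ∈ b → b = blk i := by
    intro i b hb hib
    by_contra hne'
    exact Finset.disjoint_left.mp (hdisj b hb _ (hblkP i) hne') hib (hiblk i)
  set pick : {b : Finset (Fin m) // b ∈ P} → Fin m := fun b => b.1.min' (hne _ b.2) with hpickdef
  have hpick : ∀ b, pick b ∈ b.1 := fun b => Finset.min'_mem _ _
  have hblkpick : ∀ b : {b // b ∈ P}, blk (pick b) = b.1 :=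
    fun b => (huniq (pick b) b.1 b.2 (hpick b)).symm
  -- facts for f with kerf f = P
  have fact1 : ∀ (f : Fin m → Fin s), kerf f = P →
      ∀ i, (Finset.univ.filter (fun i' => f i' = f i)) = blk i := by
    intro f hf i
    apply huniq i
    · rw [← hf]; exact mem_kerf.mpr ⟨i, rfl⟩
    · simp
  have fact2 : ∀ (f : Fin m → Fin s), kerf f = P →
      ∀ i i', i' ∈ blk i → f i' = f i := by
    intro f hf i i' hi'
    rw [← fact1 f hf i] at hi'
    simpa using hi'
  have e : {f : Fin m → Fin s // kerf f = P} ≃ ({b : Finset (Fin m) // b ∈ P} ↪ Fin s) := by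
    refine
      { toFun := fun fh => ⟨fun b => fh.1 (pick b), ?_⟩
        invFun := fun ι => ⟨fun i => ι ⟨blk i, hblkP i⟩, ?_⟩
        left_inv := ?_
        right_inv := ?_ }
    · -- injectivity
      intro b b' hbb'
      obtain ⟨f, hf⟩ := fh
      apply Subtype.ext
      have h1 : b.1 = Finset.univ.filter (fun i' => f i' = f (pick b)) := by
        rw [fact1 f hf (pick b), hblkpick]
      have h2 : b'.1 = Finset.univ.filter (fun i' => f i' = f (pick b')) := by
        rw [fact1 f hf (pick b'), hblkpick]
      rw [h1, h2]
      simp only at hbb'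
      rw [hbb']
    · -- kerf of reconstructed function = P
      set f' : Fin m → Fin s := fun i => ι ⟨blk i, hblkP i⟩ with hf'def
      have hfib : ∀ i, (Finset.univ.filter (fun i' => f' i' = f' i)) = blk i := by
        intro i
        ext i'
        simp only [Finset.mem_filter, Finset.mem_univ, true_and, hf'def]
        constructor
        · intro h
          have h2 : (⟨blk i', hblkP i'⟩ : {b // b ∈ P}) = ⟨blk i, hblkP i⟩ := ι.injective h
          have h3 : blk i' = blk i := Subtype.ext_iff.mp h2
          rw [← h3]; exact hiblk i'
        · intro h
          have h3 : blk i = blk i' := huniq i' (blk i) (hblkP i) h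
          exact congrArg ι (Subtype.ext h3.symm)
      ext b
      rw [mem_kerf]
      constructor
      · rintro ⟨i, rfl⟩
        rw [hfib i]; exact hblkP i
      · intro hb
        refine ⟨pick ⟨b, hb⟩, ?_⟩
        rw [hfib (pick ⟨b, hb⟩), hblkpick ⟨b, hb⟩]
    · -- left inverse
      rintro ⟨f, hf⟩
      apply Subtype.ext
      funext i
      simp only
      exact fact2 f hf i _ (hpick ⟨blk i, hblkP i⟩)
    · -- right inverse
      intro ι
      apply Function.Embedding.ext
      intro b
      simp only [Function.Embedding.coeFn_mk]
      exact congrArg ι (Subtype.ext (hblkpick b))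
  have hcard := Fintype.card_congr e
  rw [Fintype.card_embedding_eq, Fintype.card_coe, Fintype.card_fin] at hcard
  rw [← hcard, Fintype.card_subtype]

lemma prod_kerf_eq {m s : ℕ} (g : ℕ → ℝ) (hg0 : g 0 = 1) (f : Fin m → Fin s) :
    ∏ j : Fin s, g ((Finset.univ.filter (fun i => f i = j)).card)
      = ∏ b ∈ kerf f, g b.card := by
  classical
  rw [show (∏ j : Fin s, g ((Finset.univ.filter (fun i => f i = j)).card))
      = ∏ j ∈ Finset.univ.image f, g ((Finset.univ.filter (fun i => f i = j)).card) by
    refine (Finset.prod_subset (Finset.subset_univ _) ?_).symm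
    intro j _ hj
    have : (Finset.univ.filter (fun i => f i = j)) = ∅ := by
      rw [Finset.filter_eq_empty_iff]
      intro i _
      intro hij
      exact hj (Finset.mem_image.mpr ⟨i, Finset.mem_univ i, hij⟩)
    rw [this]; simpa using hg0]
  rw [kerf]
  refine (Finset.prod_image (s := Finset.univ.image f)
    (g := fun j => Finset.univ.filter (fun i => f i = j))
    (f := fun b : Finset (Fin m) => g b.card) ?_).symm
  intro j hj j' hj' hjj'
  obtain ⟨i, _, rfl⟩ := Finset.mem_image.mp hj
  have h2 : Finset.filter (fun i' => f i' = f i) Finset.univ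
      = Finset.filter (fun i' => f i' = j') Finset.univ := hjj'
  have : i ∈ Finset.filter (fun i' => f i' = j') Finset.univ := by rw [← h2]; simp
  simpa using this

lemma sum_funs_eq {m s : ℕ} (g : ℕ → ℝ) (hg0 : g 0 = 1) :
    ∑ f : Fin m → Fin s, ∏ j : Fin s, g ((Finset.univ.filter (fun i => f i = j)).card)
      = ∑ P ∈ Finset.univ.filter (IsPartitionFinset m),
          (s.descFactorial P.card : ℝ) * ∏ b ∈ P, g b.card := by
  classical
  rw [← Finset.sum_fiberwise_of_maps_to
    (g := fun f : Fin m → Fin s => kerf f)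
    (fun f _ => Finset.mem_filter.mpr ⟨Finset.mem_univ _, kerf_isPartition f⟩)]
  refine Finset.sum_congr rfl ?_
  intro P hP
  have hPpart : IsPartitionFinset m P := (Finset.mem_filter.mp hP).2
  calc ∑ f ∈ Finset.univ.filter (fun f : Fin m → Fin s => kerf f = P),
        ∏ j : Fin s, g ((Finset.univ.filter (fun i => f i = j)).card)
      = ∑ _f ∈ Finset.univ.filter (fun f : Fin m → Fin s => kerf f = P),
          ∏ b ∈ P, g b.card := by
        refine Finset.sum_congr rfl fun f hf => ?_
        have hker : kerf f = P := (Finset.mem_filter.mp hf).2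
        rw [prod_kerf_eq g hg0 f, hker]
    _ = _ := by rw [Finset.sum_const, card_kerf_eq hPpart, nsmul_eq_mul]



lemma integrable_dirac_meas {f : ℝ → ℝ} (hf : Measurable f) (a : ℝ) :
    Integrable f (Measure.dirac a) := by
  refine ⟨hf.aestronglyMeasurable, ?_⟩
  rw [HasFiniteIntegral, lintegral_dirac]
  exact ENNReal.coe_lt_top

lemma integral_two_dirac_s5 (c1 c2 : ENNReal) (hc1 : c1 ≠ ⊤) (hc2 : c2 ≠ ⊤) (a1 a2 : ℝ)
    {f : ℝ → ℝ} (hf : Measurable f) :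
    Integrable f (c1 • Measure.dirac a1 + c2 • Measure.dirac a2) ∧
      ∫ x, f x ∂(c1 • Measure.dirac a1 + c2 • Measure.dirac a2)
        = c1.toReal * f a1 + c2.toReal * f a2 := by
  have h1 : Integrable f (c1 • Measure.dirac a1) :=
    (integrable_dirac_meas hf a1).smul_measure hc1
  have h2 : Integrable f (c2 • Measure.dirac a2) :=
    (integrable_dirac_meas hf a2).smul_measure hc2
  refine ⟨h1.add_measure h2, ?_⟩
  rw [integral_add_measure h1 h2, integral_smul_measure, integral_smul_measure,
    integral_dirac, integral_dirac, smul_eq_mul, smul_eq_mul]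


noncomputable def gvP (lam : ℝ) (ν : Measure ℝ) (s c : ℕ) : ℝ :=
  ((1 - lam/(s:ℝ)) * 0^c + (lam/(s:ℝ)) * 1^c) * ((((-1):ℝ)^c + 1)/2) * ∫ x, x^c ∂ν


/-- **Algebraic central limit step in the proof of Theorem 4.8 of the paper** (scalar,
commutative instance): if for every `s ≥ λ` the random variables
`B₁⁽ˢ⁾, …, B_s⁽ˢ⁾, ε₁⁽ˢ⁾, …, ε_s⁽ˢ⁾, X₁⁽ˢ⁾, …, X_s⁽ˢ⁾` are mutually independent with `B_j⁽ˢ⁾`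
Bernoulli of parameter `λ/s`, `ε_j⁽ˢ⁾` uniform on `{-1, 1}` and `X_j⁽ˢ⁾` distributed as `ν`,
then `E[(Σ_j B_j⁽ˢ⁾ ε_j⁽ˢ⁾ X_j⁽ˢ⁾)^m] → Σ_{σ even partition of {1,…,m}} λ^{|σ|} Π_k m_{|σ_k|}`
as `s → ∞`, where `m_ℓ = ∫ x^ℓ dν`. -/
theorem stmt_5 (lam : ℝ) (hlam : 0 < lam) (m : ℕ) (hm : 0 < m)
    (ν : Measure ℝ) [IsProbabilityMeasure ν]
    (hmom : Integrable (fun x => |x| ^ m) ν)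
    (Ω : ℕ → Type) (mΩ : ∀ s, MeasurableSpace (Ω s)) (μ : ∀ s, Measure (Ω s))
    (hprob : ∀ s, IsProbabilityMeasure (μ s))
    (B e X : ∀ s : ℕ, Fin s → Ω s → ℝ)
    (hBmeas : ∀ s j, Measurable (B s j)) (hemeas : ∀ s j, Measurable (e s j))
    (hXmeas : ∀ s j, Measurable (X s j))
    (hindep : ∀ s : ℕ, lam ≤ (s : ℝ) →
      iIndepFun (Sum.elim (B s) (Sum.elim (e s) (X s))) (μ s))
    (hB : ∀ s : ℕ, lam ≤ (s : ℝ) → ∀ j, Measure.map (B s j) (μ s)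
      = ENNReal.ofReal (1 - lam / s) • Measure.dirac (0 : ℝ)
        + ENNReal.ofReal (lam / s) • Measure.dirac (1 : ℝ))
    (he : ∀ s : ℕ, lam ≤ (s : ℝ) → ∀ j, Measure.map (e s j) (μ s)
      = (2 : ENNReal)⁻¹ • Measure.dirac (-1 : ℝ) + (2 : ENNReal)⁻¹ • Measure.dirac (1 : ℝ))
    (hX : ∀ s : ℕ, lam ≤ (s : ℝ) → ∀ j, Measure.map (X s j) (μ s) = ν) :
    Tendsto (fun s : ℕ => ∫ ω, (∑ j, B s j ω * e s j ω * X s j ω) ^ m ∂(μ s)) atTop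
      (nhds (∑ P ∈ Finset.univ.filter
          (fun P : Finset (Finset (Fin m)) =>
            IsPartitionFinset m P ∧ ∀ b ∈ P, Even b.card),
          lam ^ P.card * ∏ b ∈ P, ∫ x, x ^ b.card ∂ν)) := by
    classical
  have int_nu : ∀ c ≤ m, Integrable (fun x : ℝ => x^c) ν := by
    intro c hc
    refine ((integrable_const (1:ℝ)).add hmom).mono
      ((measurable_id.pow_const c).aestronglyMeasurable) ?_
    filter_upwards with x
    have h2 : (0:ℝ) ≤ 1 + |x|^m := by positivity
    simp only [Pi.add_apply, Real.norm_eq_abs, abs_pow]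
    rw [abs_of_nonneg h2]
    have hxm : (0:ℝ) ≤ |x|^m := by positivity
    rcases le_or_gt (|x|) 1 with hx | hx
    · have h4 : |x|^c ≤ 1 := pow_le_one₀ (abs_nonneg x) hx
      linarith
    · have h4 : |x|^c ≤ |x|^m := pow_le_pow_right₀ hx.le hc
      linarith
  have key : ∀ s : ℕ, lam ≤ (s:ℝ) →
      ∫ ω, (∑ j, B s j ω * e s j ω * X s j ω) ^ m ∂(μ s)
        = ∑ P ∈ Finset.univ.filter (IsPartitionFinset m),
            (s.descFactorial P.card : ℝ) * ∏ b ∈ P, gvP lam ν s b.card := by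
    intro s hs
    haveI := hprob s
    have hs0 : (0:ℝ) < s := lt_of_lt_of_le hlam hs
    set W := Sum.elim (B s) (Sum.elim (e s) (X s)) with hW
    have hWmeas : ∀ t, Measurable (W t) := by
      rintro (j | j | j)
      exacts [hBmeas s j, hemeas s j, hXmeas s j]
    -- moments of B
    have momB : ∀ (j : Fin s) (c : ℕ), Integrable (fun ω => (B s j ω)^c) (μ s) ∧
        ∫ ω, (B s j ω)^c ∂(μ s) = (1 - lam/s) * 0^c + (lam/s) * 1^c := by
      intro j c
      have hfc : Measurable (fun x : ℝ => x ^ c) := measurable_id.pow_const c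
      have h2 := integral_two_dirac_s5 (ENNReal.ofReal (1 - lam/s)) (ENNReal.ofReal (lam/s))
        ENNReal.ofReal_ne_top ENNReal.ofReal_ne_top 0 1 hfc
      have hmap := hB s hs j
      have hint : Integrable (fun x : ℝ => x^c) (Measure.map (B s j) (μ s)) := by
        rw [hmap]; exact h2.1
      have hi := (integrable_map_measure hfc.aestronglyMeasurable
        (hBmeas s j).aemeasurable).mp hint
      refine ⟨hi, ?_⟩
      have hIeq : ∫ ω, (B s j ω)^c ∂(μ s) = ∫ x, x^c ∂(Measure.map (B s j) (μ s)) :=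
        (integral_map (hBmeas s j).aemeasurable hfc.aestronglyMeasurable).symm
      rw [hIeq, hmap, h2.2,
        ENNReal.toReal_ofReal (sub_nonneg.mpr ((div_le_one hs0).mpr hs)),
        ENNReal.toReal_ofReal (by positivity : (0:ℝ) ≤ lam/s)]
    -- moments of e
    have mome : ∀ (j : Fin s) (c : ℕ), Integrable (fun ω => (e s j ω)^c) (μ s) ∧
        ∫ ω, (e s j ω)^c ∂(μ s) = (((-1):ℝ)^c + 1)/2 := by
      intro j c
      have hfc : Measurable (fun x : ℝ => x ^ c) := measurable_id.pow_const c
      have h2 := integral_two_dirac_s5 ((2 : ENNReal)⁻¹) ((2 : ENNReal)⁻¹)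
        (by simp) (by simp) (-1) 1 hfc
      have hmap := he s hs j
      have hint : Integrable (fun x : ℝ => x^c) (Measure.map (e s j) (μ s)) := by
        rw [hmap]; exact h2.1
      have hi := (integrable_map_measure hfc.aestronglyMeasurable
        (hemeas s j).aemeasurable).mp hint
      refine ⟨hi, ?_⟩
      have hIeq : ∫ ω, (e s j ω)^c ∂(μ s) = ∫ x, x^c ∂(Measure.map (e s j) (μ s)) :=
        (integral_map (hemeas s j).aemeasurable hfc.aestronglyMeasurable).symm
      rw [hIeq, hmap, h2.2]
      have h3 : ((2 : ENNReal)⁻¹).toReal = (2:ℝ)⁻¹ := by simp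
      rw [h3, one_pow]; ring
    -- moments of X
    have momX : ∀ (j : Fin s) (c : ℕ), c ≤ m →
        Integrable (fun ω => (X s j ω)^c) (μ s) ∧
        ∫ ω, (X s j ω)^c ∂(μ s) = ∫ x, x^c ∂ν := by
      intro j c hc
      have hfc : Measurable (fun x : ℝ => x ^ c) := measurable_id.pow_const c
      have hmap := hX s hs j
      have hint : Integrable (fun x : ℝ => x^c) (Measure.map (X s j) (μ s)) := by
        rw [hmap]; exact int_nu c hc
      have hi := (integrable_map_measure hfc.aestronglyMeasurable
        (hXmeas s j).aemeasurable).mp hint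
      refine ⟨hi, ?_⟩
      have hIeq : ∫ ω, (X s j ω)^c ∂(μ s) = ∫ x, x^c ∂(Measure.map (X s j) (μ s)) :=
        (integral_map (hXmeas s j).aemeasurable hfc.aestronglyMeasurable).symm
      rw [hIeq, hmap]
    -- per-function expectation
    have perf : ∀ f : Fin m → Fin s,
        Integrable (fun ω => ∏ i : Fin m, (B s (f i) ω * e s (f i) ω * X s (f i) ω)) (μ s) ∧
        ∫ ω, ∏ i : Fin m, (B s (f i) ω * e s (f i) ω * X s (f i) ω) ∂(μ s)
          = ∏ j : Fin s, gvP lam ν s ((Finset.univ.filter (fun i => f i = j)).card) := by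
      intro f
      set cf : Fin s → ℕ := fun j => (Finset.univ.filter (fun i => f i = j)).card with hcf
      have hcfle : ∀ j, cf j ≤ m := by
        intro j
        calc cf j ≤ Finset.univ.card := Finset.card_filter_le _ _
          _ = m := by simp
      set cc : Fin s ⊕ (Fin s ⊕ Fin s) → ℕ := Sum.elim cf (Sum.elim cf cf) with hcc
      set F : Fin s ⊕ (Fin s ⊕ Fin s) → Ω s → ℝ := fun t ω => (W t ω)^(cc t) with hF
      have hFmeas : ∀ t, Measurable (F t) := fun t => (hWmeas t).pow_const (cc t)
      have hFindep : iIndepFun F (μ s) := by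
        have := (hindep s hs).comp (fun t (x : ℝ) => x^(cc t))
          (fun t => measurable_id.pow_const (cc t))
        exact this
      have hFint : ∀ t ∈ (Finset.univ : Finset (Fin s ⊕ (Fin s ⊕ Fin s))),
          Integrable (F t) (μ s) := by
        rintro (j | j | j) -
        · exact (momB j (cf j)).1
        · exact (mome j (cf j)).1
        · exact (momX j (cf j) (hcfle j)).1
      obtain ⟨hIntProd, hEqProd⟩ := aux_indep_prod F hFmeas hFindep Finset.univ hFint
      -- pointwise identity
      have fiberpow : ∀ (h : Fin s → ℝ),
          (∏ i : Fin m, h (f i)) = ∏ j : Fin s, h j ^ (cf j) := by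
        intro h
        rw [← Finset.prod_fiberwise_of_maps_to (g := f)
          (fun i _ => Finset.mem_univ (f i)) (fun i => h (f i))]
        refine Finset.prod_congr rfl fun j _ => ?_
        have hco : ∀ i ∈ Finset.filter (fun i => f i = j) Finset.univ,
            h (f i) = h j := by
          intro i hi
          have : f i = j := (Finset.mem_filter.mp hi).2
          rw [this]
        rw [Finset.prod_congr rfl hco, Finset.prod_const]
      have hpoint : ∀ ω, ∏ i : Fin m, (B s (f i) ω * e s (f i) ω * X s (f i) ω)
          = ∏ t, F t ω := by
        intro ω
        rw [Finset.prod_mul_distrib, Finset.prod_mul_distrib,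
          fiberpow (fun j => B s j ω), fiberpow (fun j => e s j ω),
          fiberpow (fun j => X s j ω), Fintype.prod_sum_type, Fintype.prod_sum_type,
          mul_assoc]
        rfl
      have hfuneq : (fun ω => ∏ i : Fin m, (B s (f i) ω * e s (f i) ω * X s (f i) ω))
          = fun ω => ∏ t, F t ω := funext hpoint
      constructor
      · rw [hfuneq]; exact hIntProd
      · rw [hfuneq, hEqProd, Fintype.prod_sum_type, Fintype.prod_sum_type]
        have hB' : ∀ j : Fin s, (∫ ω, F (Sum.inl j) ω ∂(μ s))
            = (1 - lam/s) * 0^(cf j) + (lam/s) * 1^(cf j) := fun j => (momB j (cf j)).2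
        have he' : ∀ j : Fin s, (∫ ω, F (Sum.inr (Sum.inl j)) ω ∂(μ s))
            = (((-1):ℝ)^(cf j) + 1)/2 := fun j => (mome j (cf j)).2
        have hX' : ∀ j : Fin s, (∫ ω, F (Sum.inr (Sum.inr j)) ω ∂(μ s))
            = ∫ x, x^(cf j) ∂ν := fun j => (momX j (cf j) (hcfle j)).2
        rw [Finset.prod_congr rfl (fun j _ => hB' j),
          Finset.prod_congr rfl (fun j _ => he' j),
          Finset.prod_congr rfl (fun j _ => hX' j),
          ← Finset.prod_mul_distrib, ← Finset.prod_mul_distrib]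
        exact Finset.prod_congr rfl fun j _ => by unfold gvP; ring
    -- expand the power of the sum and sum over functions
    have hexpand : ∫ ω, (∑ j, B s j ω * e s j ω * X s j ω) ^ m ∂(μ s)
        = ∑ f : Fin m → Fin s,
            ∫ ω, ∏ i : Fin m, (B s (f i) ω * e s (f i) ω * X s (f i) ω) ∂(μ s) := by
      rw [show (fun ω => (∑ j, B s j ω * e s j ω * X s j ω) ^ m)
          = fun ω => ∑ f : Fin m → Fin s,
              ∏ i : Fin m, (B s (f i) ω * e s (f i) ω * X s (f i) ω) by
        funext ω; rw [Fintype.sum_pow]]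
      exact integral_finset_sum _ (fun f _ => (perf f).1)
    rw [hexpand]
    rw [Finset.sum_congr rfl (fun f _ => (perf f).2)]
    refine sum_funs_eq (gvP lam ν s) ?_
    simp [gvP, measure_univ]
  -- restrict to even partitions
  set S : Finset (Finset (Finset (Fin m))) := Finset.univ.filter
    (fun P : Finset (Finset (Fin m)) =>
      IsPartitionFinset m P ∧ ∀ b ∈ P, Even b.card) with hS
  have key2 : ∀ s : ℕ, lam ≤ (s:ℝ) →
      ∫ ω, (∑ j, B s j ω * e s j ω * X s j ω) ^ m ∂(μ s)
        = ∑ P ∈ S, (s.descFactorial P.card : ℝ) * (lam/(s:ℝ))^P.card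
            * ∏ b ∈ P, ∫ x, x^b.card ∂ν := by
    intro s hs
    rw [key s hs]
    have hsub : S ⊆ Finset.univ.filter (IsPartitionFinset m) := by
      intro P hP
      rw [hS, Finset.mem_filter] at hP
      exact Finset.mem_filter.mpr ⟨Finset.mem_univ _, hP.2.1⟩
    rw [← Finset.sum_subset hsub ?zero]
    case zero =>
      intro P hP hPS
      rw [Finset.mem_filter] at hP
      rw [hS, Finset.mem_filter] at hPS
      push_neg at hPS
      obtain ⟨b, hb, hbodd⟩ := hPS (Finset.mem_univ _) hP.2
      have hodd : Odd b.card := Nat.not_even_iff_odd.mp hbodd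
      have : gvP lam ν s b.card = 0 := by
        unfold gvP
        rw [Odd.neg_one_pow hodd]
        norm_num
      rw [Finset.prod_eq_zero hb this, mul_zero]
    refine Finset.sum_congr rfl fun P hP => ?_
    rw [hS, Finset.mem_filter] at hP
    obtain ⟨-, hPpart, hPeven⟩ := hP
    have hgval : ∀ b ∈ P, gvP lam ν s b.card = (lam/(s:ℝ)) * ∫ x, x^b.card ∂ν := by
      intro b hb
      have hne : b.card ≠ 0 := (Finset.card_pos.mpr (hPpart.1 b hb)).ne'
      unfold gvP
      rw [Even.neg_one_pow (hPeven b hb), one_pow, zero_pow hne]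
      ring
    rw [Finset.prod_congr rfl hgval, Finset.prod_mul_distrib, Finset.prod_const]
    ring
  -- the limit of each summand
  have lim1 : ∀ k : ℕ, Tendsto (fun s : ℕ => ((s.descFactorial k : ℝ) * (lam/(s:ℝ))^k))
      atTop (nhds (lam ^ k)) := by
    intro k
    have hEq : ∀ᶠ s : ℕ in atTop,
        ((s.descFactorial k : ℝ) * (lam/(s:ℝ))^k)
          = ∏ i ∈ Finset.range k, (lam * (1 - (i:ℝ)/(s:ℝ))) := by
      filter_upwards [eventually_ge_atTop (max k 1)] with s hs
      have hks : k ≤ s := le_trans (le_max_left _ _) hs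
      have hs1 : 1 ≤ s := le_trans (le_max_right _ _) hs
      have hs0 : ((s:ℝ)) ≠ 0 := by
        have : (0:ℝ) < s := by exact_mod_cast Nat.lt_of_lt_of_le Nat.zero_lt_one hs1
        exact this.ne'
      rw [Nat.descFactorial_eq_prod_range, Nat.cast_prod]
      have hc : ∀ i ∈ Finset.range k, ((s - i : ℕ) : ℝ) = (s:ℝ) - (i:ℝ) := by
        intro i hi
        have : i ≤ s := le_trans (Nat.le_of_lt (Finset.mem_range.mp hi)) hks
        exact Nat.cast_sub this
      rw [Finset.prod_congr rfl hc,
        show (lam/(s:ℝ))^k = ∏ _i ∈ Finset.range k, lam/(s:ℝ) by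
          rw [Finset.prod_const, Finset.card_range],
        ← Finset.prod_mul_distrib]
      refine Finset.prod_congr rfl fun i _ => ?_
      field_simp
    have hEq' : (fun s : ℕ => ((s.descFactorial k : ℝ) * (lam/(s:ℝ))^k))
        =ᶠ[atTop] (fun s : ℕ => ∏ i ∈ Finset.range k, (lam * (1 - (i:ℝ)/(s:ℝ)))) := hEq
    refine Tendsto.congr' hEq'.symm ?_
    have hlim : Tendsto (fun s : ℕ => ∏ i ∈ Finset.range k, (lam * (1 - (i:ℝ)/(s:ℝ))))
        atTop (nhds (∏ _i ∈ Finset.range k, lam)) := by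
      refine tendsto_finset_prod _ fun i _ => ?_
      have h1 : Tendsto (fun s : ℕ => (i:ℝ)/(s:ℝ)) atTop (nhds 0) :=
        tendsto_const_div_atTop_nhds_zero_nat (i:ℝ)
      have h2 : Tendsto (fun s : ℕ => 1 - (i:ℝ)/(s:ℝ)) atTop (nhds 1) := by
        have := (tendsto_const_nhds (x := (1:ℝ)) (f := atTop)).sub h1
        simpa using this
      have := h2.const_mul lam
      simpa using this
    rw [Finset.prod_const, Finset.card_range] at hlim
    exact hlim
  -- conclude
  have hfinal : Tendsto (fun s : ℕ => ∑ P ∈ S, (s.descFactorial P.card : ℝ)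
      * (lam/(s:ℝ))^P.card * ∏ b ∈ P, ∫ x, x^b.card ∂ν) atTop
      (nhds (∑ P ∈ S, lam ^ P.card * ∏ b ∈ P, ∫ x, x ^ b.card ∂ν)) := by
    refine tendsto_finset_sum _ fun P _ => ?_
    have := (lim1 P.card).mul_const (∏ b ∈ P, ∫ x, x^b.card ∂ν)
    exact this
  rw [hS] at hfinal
  refine Tendsto.congr' ?_ hfinal
  filter_upwards [eventually_ge_atTop ⌈lam⌉₊] with s hs
  have hls : lam ≤ (s:ℝ) := le_trans (Nat.le_ceil lam) (by exact_mod_cast hs)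
  exact (key2 s hls).symm
end

section
/- Let 1 ≤ q ≤ p < ∞. There exists a constant C ≥ 1 depending only on p and q such that for every probability space (Ω, μ), every real-valued f ∈ L_p(Ω, μ), every n ≥ 1, and every independent family f_1, …, f_n of random variables each having the same distribution as f, one has C^{-1} max( n^{1/p} ‖f‖_{L_p}, n^{1/q} ‖f‖_{L_q} ) ≤ ( ∫_Ω (Σ_{k=1}^n |f_k|^q)^{p/q} dμ )^{1/p} ≤ C max( n^{1/p} ‖f‖_{L_p}, n^{1/q} ‖f‖_{L_q} ). -/
open MeasureTheory ProbabilityTheory Real BigOperators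
open scoped ENNReal NNReal

private lemma measurable_rpow_const' {Ω : Type} [MeasurableSpace Ω] {u : Ω → ℝ}
    (hu : Measurable u) {t : ℝ} (ht : 0 ≤ t) : Measurable fun ω => u ω ^ t :=
  (Real.continuous_rpow_const ht).measurable.comp hu

private lemma rpow_le_one_add_rpow {x t s : ℝ} (hx : 0 ≤ x) (ht : 0 ≤ t) (hts : t ≤ s) :
    x ^ t ≤ 1 + x ^ s := by
  rcases le_total x 1 with h | h
  · have h1 := Real.rpow_le_one hx h ht
    have h2 := Real.rpow_nonneg hx s
    linarith
  · have h1 := Real.rpow_le_rpow_of_exponent_le h hts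
    have h2 := Real.rpow_nonneg hx t
    linarith

private lemma add_rpow_le' {a b t : ℝ} (ha : 0 ≤ a) (hb : 0 ≤ b) (ht : 0 ≤ t) :
    (a + b) ^ t ≤ 2 ^ t * (a ^ t + b ^ t) := by
  have key : ∀ x y : ℝ, 0 ≤ x → 0 ≤ y → x ≤ y → (x + y) ^ t ≤ 2 ^ t * (x ^ t + y ^ t) := by
    intro x y hx hy hxy
    calc (x + y) ^ t ≤ (2 * y) ^ t := Real.rpow_le_rpow (by linarith) (by linarith) ht
      _ = 2 ^ t * y ^ t := Real.mul_rpow (by norm_num) hy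
      _ ≤ 2 ^ t * (x ^ t + y ^ t) := by
          have h1 := Real.rpow_nonneg hx t
          have h2 := Real.rpow_nonneg (le_trans zero_le_one one_le_two) t
          nlinarith
  rcases le_total a b with h | h
  · exact key a b ha hb h
  · have := key b a hb ha h
    rw [add_comm b a, add_comm (b ^ t) (a ^ t)] at this
    exact this

private lemma rpow_sub_one_mul {x r : ℝ} (hx : 0 ≤ x) (hr : 1 ≤ r) :
    x ^ (r - 1) * x = x ^ r := by
  rcases eq_or_lt_of_le hx with h | h
  · rw [← h, Real.zero_rpow (by linarith : r ≠ 0), mul_zero]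
  · rw [← Real.rpow_add_one h.ne' (r - 1), sub_add_cancel]

private lemma le_rpow_sub_one_mul {x y r : ℝ} (hx : 0 ≤ x) (hxy : x ≤ y) (hr : 1 ≤ r) :
    x ^ r ≤ y ^ (r - 1) * x := by
  rw [← rpow_sub_one_mul hx hr]
  exact mul_le_mul_of_nonneg_right (Real.rpow_le_rpow hx hxy (by linarith)) hx

private lemma sum_rpow_le_rpow_sum' {ι : Type} (s : Finset ι) (a : ι → ℝ) {r : ℝ}
    (hr : 1 ≤ r) (ha : ∀ i ∈ s, 0 ≤ a i) :
    ∑ i ∈ s, a i ^ r ≤ (∑ i ∈ s, a i) ^ r := by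
  have hs : 0 ≤ ∑ i ∈ s, a i := Finset.sum_nonneg ha
  calc ∑ i ∈ s, a i ^ r ≤ ∑ i ∈ s, (∑ j ∈ s, a j) ^ (r - 1) * a i := by
        refine Finset.sum_le_sum fun i hi => ?_
        exact le_rpow_sub_one_mul (ha i hi) (Finset.single_le_sum ha hi) hr
    _ = (∑ j ∈ s, a j) ^ (r - 1) * ∑ i ∈ s, a i := (Finset.mul_sum _ _ _).symm
    _ = (∑ i ∈ s, a i) ^ r := rpow_sub_one_mul hs hr

private lemma max_rpow' {x y t : ℝ} (hx : 0 ≤ x) (hy : 0 ≤ y) (ht : 0 ≤ t) :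
    (max x y) ^ t = max (x ^ t) (y ^ t) := by
  rcases le_total x y with h | h
  · rw [max_eq_right h, max_eq_right (Real.rpow_le_rpow hx h ht)]
  · rw [max_eq_left h, max_eq_left (Real.rpow_le_rpow hy h ht)]

private lemma jensen_rpow {Ω : Type} [MeasurableSpace Ω] {μ : Measure Ω}
    [IsProbabilityMeasure μ] {u : Ω → ℝ} (hu : Measurable u) (hnn : ∀ ω, 0 ≤ u ω)
    {s : ℝ} (hs : 1 < s) (hint : Integrable (fun ω => u ω ^ s) μ) :
    ∫ ω, u ω ∂μ ≤ (∫ ω, u ω ^ s ∂μ) ^ (1 / s) := by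
  have hs0 : (0:ℝ) < s := lt_trans zero_lt_one hs
  have hconj : s.HolderConjugate (s / (s - 1)) := Real.HolderConjugate.conjExponent hs
  set F : Ω → ℝ≥0∞ := fun ω => ENNReal.ofReal (u ω) with hF
  have hFmeas : AEMeasurable F μ := (ENNReal.measurable_ofReal.comp hu).aemeasurable
  have key := ENNReal.lintegral_mul_le_Lp_mul_Lq μ hconj hFmeas
    (aemeasurable_const : AEMeasurable (fun _ : Ω => (1:ℝ≥0∞)) μ)
  simp only [Pi.mul_apply, mul_one, ENNReal.one_rpow, lintegral_one, measure_univ] at key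
  have hlint : ∫⁻ ω, F ω ^ s ∂μ = ENNReal.ofReal (∫ ω, u ω ^ s ∂μ) := by
    have h1 : ∫⁻ ω, F ω ^ s ∂μ = ∫⁻ ω, ENNReal.ofReal (u ω ^ s) ∂μ :=
      lintegral_congr fun ω => ENNReal.ofReal_rpow_of_nonneg (hnn ω) hs0.le
    rw [h1, ← MeasureTheory.ofReal_integral_eq_lintegral_ofReal hint
        (Filter.Eventually.of_forall fun ω => Real.rpow_nonneg (hnn ω) s)]
  rw [hlint] at key
  have hIs : (0:ℝ) ≤ ∫ ω, u ω ^ s ∂μ :=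
    integral_nonneg fun ω => Real.rpow_nonneg (hnn ω) s
  have hfin : (ENNReal.ofReal (∫ ω, u ω ^ s ∂μ)) ^ (1 / s) ≠ ⊤ :=
    ENNReal.rpow_ne_top_of_nonneg (by positivity) ENNReal.ofReal_ne_top
  calc ∫ ω, u ω ∂μ = (∫⁻ ω, F ω ∂μ).toReal := by
        rw [integral_eq_lintegral_of_nonneg_ae (Filter.Eventually.of_forall hnn)
          hu.aestronglyMeasurable]
    _ ≤ ((ENNReal.ofReal (∫ ω, u ω ^ s ∂μ)) ^ (1 / s)).toReal :=
        ENNReal.toReal_mono hfin key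
    _ = (∫ ω, u ω ^ s ∂μ) ^ (1 / s) := by
        rw [← ENNReal.toReal_rpow, ENNReal.toReal_ofReal hIs]

private lemma integrable_rpow_sum {Ω : Type} [MeasurableSpace Ω] {μ : Measure Ω}
    [IsProbabilityMeasure μ] {n : ℕ} {X : Fin n → Ω → ℝ}
    (hmeas : ∀ k, Measurable (X k)) (hnn : ∀ k ω, 0 ≤ X k ω)
    {r : ℝ} (hr : 1 ≤ r) (hint : ∀ k, Integrable (fun ω => X k ω ^ r) μ)
    (s : Finset (Fin n)) :
    Integrable (fun ω => (∑ k ∈ s, X k ω) ^ r) μ := by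
  classical
  have hr0 : (0:ℝ) ≤ r := by linarith
  induction s using Finset.induction_on with
  | empty =>
      simp only [Finset.sum_empty, Real.zero_rpow (by linarith : r ≠ 0)]
      exact integrable_const 0
  | insert i s hi ih =>
      have hmeas' : Measurable fun ω => (∑ k ∈ insert i s, X k ω) ^ r :=
        measurable_rpow_const' (Finset.measurable_sum _ fun k _ => hmeas k) hr0
      refine Integrable.mono'
        ((((hint i).add ih).const_mul ((2:ℝ) ^ r))) hmeas'.aestronglyMeasurable
        (Filter.Eventually.of_forall fun ω => ?_)
      have hTnn : 0 ≤ ∑ k ∈ s, X k ω := Finset.sum_nonneg fun k _ => hnn k ω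
      have hsum_nn : 0 ≤ ∑ k ∈ insert i s, X k ω :=
        Finset.sum_nonneg fun k _ => hnn k ω
      rw [Real.norm_of_nonneg (Real.rpow_nonneg hsum_nn r), Finset.sum_insert hi]
      exact add_rpow_le' (hnn i ω) hTnn hr0

private lemma rosenthal_bound {Ω : Type} [MeasurableSpace Ω] {μ : Measure Ω}
    [IsProbabilityMeasure μ] {n : ℕ} {X : Fin n → Ω → ℝ}
    (hmeas : ∀ k, Measurable (X k)) (hnn : ∀ k ω, 0 ≤ X k ω)
    (hindep : iIndepFun X μ)
    {r : ℝ} (hr : 1 ≤ r) (hint : ∀ k, Integrable (fun ω => X k ω ^ r) μ) :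
    ∫ ω, (∑ k, X k ω) ^ r ∂μ ≤
      max ((2 * 2 ^ r * ∑ k, ∫ ω, X k ω ∂μ) ^ r) (2 * 2 ^ r * ∑ k, ∫ ω, X k ω ^ r ∂μ) := by
  classical
  have hr0 : (0:ℝ) ≤ r := by linarith
  have hrne : r ≠ 0 := by linarith
  have hXint : ∀ k, Integrable (X k) μ := by
    intro k
    refine Integrable.mono' ((integrable_const (1:ℝ)).add (hint k))
      (hmeas k).aestronglyMeasurable (Filter.Eventually.of_forall fun ω => ?_)
    rw [Real.norm_of_nonneg (hnn k ω)]
    have := rpow_le_one_add_rpow (hnn k ω) zero_le_one hr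
    rwa [Real.rpow_one] at this
  set A := ∑ k, ∫ ω, X k ω ∂μ with hA
  set B := ∑ k, ∫ ω, X k ω ^ r ∂μ with hB
  have hA0 : 0 ≤ A := Finset.sum_nonneg fun k _ => integral_nonneg fun ω => hnn k ω
  have hB0 : 0 ≤ B := Finset.sum_nonneg fun k _ =>
    integral_nonneg fun ω => Real.rpow_nonneg (hnn k ω) r
  have h2r1 : (1:ℝ) ≤ 2 ^ r := Real.one_le_rpow one_le_two hr0
  have h2r0 : (0:ℝ) < 2 ^ r := lt_of_lt_of_le zero_lt_one h2r1
  have hSmeas : Measurable fun ω => ∑ k, X k ω := Finset.measurable_sum _ fun k _ => hmeas k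
  have hSnn : ∀ ω, 0 ≤ ∑ k, X k ω := fun ω => Finset.sum_nonneg fun k _ => hnn k ω
  have hSr_int : Integrable (fun ω => (∑ k, X k ω) ^ r) μ :=
    integrable_rpow_sum hmeas hnn hr hint Finset.univ
  set m := ∫ ω, (∑ k, X k ω) ^ r ∂μ with hm
  have hm0 : 0 ≤ m := integral_nonneg fun ω => Real.rpow_nonneg (hSnn ω) r
  rcases eq_or_lt_of_le hr with hr1 | hr1
  · -- r = 1
    have hmA : m = A := by
      rw [hm, hA]
      rw [← integral_finset_sum _ fun k _ => hXint k]
      refine integral_congr_ae (Filter.Eventually.of_forall fun ω => ?_)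
      simp [← hr1]
    have hAB : A = B := by
      rw [hA, hB]
      refine Finset.sum_congr rfl fun k _ => ?_
      refine integral_congr_ae (Filter.Eventually.of_forall fun ω => ?_)
      simp [← hr1]
    refine le_max_of_le_right ?_
    rw [hmA, hAB]
    nlinarith
  · -- 1 < r
    set Si : Fin n → Ω → ℝ := fun i ω => ∑ k ∈ Finset.univ.erase i, X k ω with hSi
    have hSi_eq : ∀ i ω, X i ω + Si i ω = ∑ k, X k ω := by
      intro i ω
      simp only [hSi]
      exact Finset.add_sum_erase Finset.univ (fun k => X k ω) (Finset.mem_univ i)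
    have hSi_nn : ∀ i ω, 0 ≤ Si i ω := fun i ω =>
      Finset.sum_nonneg fun k _ => hnn k ω
    have hSi_meas : ∀ i, Measurable (Si i) := fun i =>
      Finset.measurable_sum _ fun k _ => hmeas k
    have hSi_le : ∀ i ω, Si i ω ≤ ∑ k, X k ω := fun i ω => by
      have := hSi_eq i ω; have := hnn i ω; linarith
    have hSir_int : ∀ i, Integrable (fun ω => Si i ω ^ r) μ := fun i =>
      integrable_rpow_sum hmeas hnn hr hint _
    have hSirm1_int : ∀ i, Integrable (fun ω => Si i ω ^ (r - 1)) μ := by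
      intro i
      refine Integrable.mono' ((integrable_const (1:ℝ)).add (hSir_int i))
        (measurable_rpow_const' (hSi_meas i) (by linarith)).aestronglyMeasurable
        (Filter.Eventually.of_forall fun ω => ?_)
      rw [Real.norm_of_nonneg (Real.rpow_nonneg (hSi_nn i ω) _)]
      exact rpow_le_one_add_rpow (hSi_nn i ω) (by linarith) (by linarith)
    have hindep_i : ∀ i, IndepFun (X i) (fun ω => Si i ω ^ (r - 1)) μ := by
      intro i
      have h1 : IndepFun (∑ k ∈ Finset.univ.erase i, X k) (X i) μ :=
        hindep.indepFun_finsetSum_of_notMem hmeas (Finset.notMem_erase i _)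
      have heq : (fun ω => Si i ω ^ (r - 1))
          = (fun x : ℝ => id x ^ (r - 1)) ∘ (∑ k ∈ Finset.univ.erase i, X k) := by
        funext ω
        simp [Function.comp, hSi, Finset.sum_apply]
      rw [heq]
      exact h1.symm.comp measurable_id
        (measurable_rpow_const' measurable_id (by linarith : (0:ℝ) ≤ r - 1))
    have hmul_int : ∀ i, Integrable (fun ω => X i ω * Si i ω ^ (r - 1)) μ := fun i =>
      (hindep_i i).integrable_mul (hXint i) (hSirm1_int i)
    have hmul_eq : ∀ i, ∫ ω, X i ω * Si i ω ^ (r - 1) ∂μ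
        = (∫ ω, X i ω ∂μ) * ∫ ω, Si i ω ^ (r - 1) ∂μ := fun i =>
      (hindep_i i).integral_mul_eq_mul_integral (hXint i).aestronglyMeasurable
        (hSirm1_int i).aestronglyMeasurable
    -- pointwise bound
    have hpt : ∀ ω, (∑ k, X k ω) ^ r
        ≤ ∑ i, 2 ^ r * (X i ω ^ r + X i ω * Si i ω ^ (r - 1)) := by
      intro ω
      have h1 : (∑ k, X k ω) ^ r = ∑ i, X i ω * (∑ k, X k ω) ^ (r - 1) := by
        rw [← Finset.sum_mul, mul_comm, rpow_sub_one_mul (hSnn ω) hr]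
      rw [h1]
      refine Finset.sum_le_sum fun i _ => ?_
      have hsplit : (∑ k, X k ω) = X i ω + Si i ω := (hSi_eq i ω).symm
      calc X i ω * (∑ k, X k ω) ^ (r - 1)
          = X i ω * (X i ω + Si i ω) ^ (r - 1) := by rw [← hsplit]
        _ ≤ X i ω * (2 ^ (r - 1) * (X i ω ^ (r - 1) + Si i ω ^ (r - 1))) :=
            mul_le_mul_of_nonneg_left
              (add_rpow_le' (hnn i ω) (hSi_nn i ω) (by linarith)) (hnn i ω)
        _ = 2 ^ (r - 1) * (X i ω ^ (r - 1) * X i ω + X i ω * Si i ω ^ (r - 1)) := by ring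
        _ = 2 ^ (r - 1) * (X i ω ^ r + X i ω * Si i ω ^ (r - 1)) := by
            rw [rpow_sub_one_mul (hnn i ω) hr]
        _ ≤ 2 ^ r * (X i ω ^ r + X i ω * Si i ω ^ (r - 1)) := by
            refine mul_le_mul_of_nonneg_right
              (Real.rpow_le_rpow_of_exponent_le one_le_two (by linarith)) ?_
            have := Real.rpow_nonneg (hnn i ω) r
            have := mul_nonneg (hnn i ω) (Real.rpow_nonneg (hSi_nn i ω) (r - 1))
            linarith
    -- integrate
    have hterm_int : ∀ i : Fin n, Integrable
        (fun ω => 2 ^ r * (X i ω ^ r + X i ω * Si i ω ^ (r - 1))) μ := fun i =>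
      (((hint i).add (hmul_int i)).const_mul ((2:ℝ) ^ r))
    have hRHS_int : Integrable
        (fun ω => ∑ i, 2 ^ r * (X i ω ^ r + X i ω * Si i ω ^ (r - 1))) μ :=
      integrable_finset_sum _ fun i _ => hterm_int i
    have hstep1 : m ≤ ∑ i, 2 ^ r * ((∫ ω, X i ω ^ r ∂μ)
        + (∫ ω, X i ω ∂μ) * ∫ ω, Si i ω ^ (r - 1) ∂μ) := by
      have h := integral_mono hSr_int hRHS_int hpt
      rw [integral_finset_sum _ fun i _ => hterm_int i] at h
      refine le_trans h (le_of_eq (Finset.sum_congr rfl fun i _ => ?_))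
      rw [integral_const_mul, integral_add (hint i) (hmul_int i), hmul_eq i]
    have hSim1_le : ∀ i, ∫ ω, Si i ω ^ (r - 1) ∂μ ≤ m ^ ((r - 1) / r) := by
      intro i
      have hs1 : 1 < r / (r - 1) := by
        rw [lt_div_iff₀ (by linarith : (0:ℝ) < r - 1)]
        linarith
      have hexp_int : Integrable (fun ω => (Si i ω ^ (r - 1)) ^ (r / (r - 1))) μ := by
        have heq : ∀ ω, (Si i ω ^ (r - 1)) ^ (r / (r - 1)) = Si i ω ^ r := by
          intro ω
          rw [← Real.rpow_mul (hSi_nn i ω)]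
          congr 1
          rw [mul_comm]
          exact div_mul_cancel₀ r (by linarith)
        simpa only [heq] using hSir_int i
      have hj := jensen_rpow (μ := μ)
        (measurable_rpow_const' (hSi_meas i) (by linarith : (0:ℝ) ≤ r - 1))
        (fun ω => Real.rpow_nonneg (hSi_nn i ω) _) hs1 hexp_int
      have heq2 : ∀ ω, (Si i ω ^ (r - 1)) ^ (r / (r - 1)) = Si i ω ^ r := by
        intro ω
        rw [← Real.rpow_mul (hSi_nn i ω)]
        congr 1
        rw [mul_comm]
        exact div_mul_cancel₀ r (by linarith)
      rw [show (1 : ℝ) / (r / (r - 1)) = (r - 1) / r by rw [one_div_div]] at hj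
      simp only [heq2] at hj
      refine le_trans hj ?_
      refine Real.rpow_le_rpow (integral_nonneg fun ω => Real.rpow_nonneg (hSi_nn i ω) r)
        ?_ (div_nonneg (by linarith) (by linarith))
      refine integral_mono (hSir_int i) hSr_int fun ω => ?_
      exact Real.rpow_le_rpow (hSi_nn i ω) (hSi_le i ω) hr0
    have hkey : m ≤ 2 ^ r * (B + A * m ^ ((r - 1) / r)) := by
      refine le_trans hstep1 ?_
      have : ∀ i, (2:ℝ) ^ r * ((∫ ω, X i ω ^ r ∂μ)
          + (∫ ω, X i ω ∂μ) * ∫ ω, Si i ω ^ (r - 1) ∂μ)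
          ≤ 2 ^ r * ((∫ ω, X i ω ^ r ∂μ)
          + (∫ ω, X i ω ∂μ) * m ^ ((r - 1) / r)) := by
        intro i
        refine mul_le_mul_of_nonneg_left (add_le_add (le_refl _) ?_) (le_of_lt h2r0)
        exact mul_le_mul_of_nonneg_left (hSim1_le i)
          (integral_nonneg fun ω => hnn i ω)
      refine le_trans (Finset.sum_le_sum fun i _ => this i) (le_of_eq ?_)
      rw [← Finset.mul_sum, Finset.sum_add_distrib, ← Finset.sum_mul]
    -- scalar argument
    rcases le_or_gt m 0 with hm0' | hm0'
    · exact le_max_of_le_right (le_trans hm0'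
        (mul_nonneg (by positivity) hB0))
    · rcases le_total (A * m ^ ((r - 1) / r)) B with hAB | hAB
      · refine le_max_of_le_right ?_
        nlinarith
      · have hc0 : (0:ℝ) < m ^ ((r - 1) / r) := Real.rpow_pos_of_pos hm0' _
        have h1 : m ≤ (2 * 2 ^ r * A) * m ^ ((r - 1) / r) := by nlinarith
        have hsplit : m ^ (1 / r) * m ^ ((r - 1) / r) = m := by
          rw [← Real.rpow_add hm0']
          rw [show 1 / r + (r - 1) / r = 1 by field_simp; ring]
          rw [Real.rpow_one]
        have h2 : m ^ (1 / r) ≤ 2 * 2 ^ r * A := by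
          have h1' : m ^ (1 / r) * m ^ ((r - 1) / r)
              ≤ (2 * 2 ^ r * A) * m ^ ((r - 1) / r) := by
            rw [hsplit]
            exact h1
          exact le_of_mul_le_mul_right h1' hc0
        refine le_max_of_le_left ?_
        calc m = (m ^ (1 / r)) ^ r := by
              rw [← Real.rpow_mul hm0'.le, one_div_mul_cancel hrne, Real.rpow_one]
          _ ≤ (2 * 2 ^ r * A) ^ r :=
              Real.rpow_le_rpow (Real.rpow_nonneg hm0'.le _) h2 hr0

/-- **Identically-distributed form of the inequality (Σ_{pq})** from Section 3 of the paper: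
for `1 ≤ q ≤ p < ∞` there is a constant `C`, depending only on `p` and `q`, such that for every
probability space, every `f ∈ L_p` and every independent family `f₁, …, fₙ` of copies of `f`,
`(∫ (Σ |f_k|^q)^{p/q})^{1/p} ≈ max( n^{1/p} ‖f‖_p, n^{1/q} ‖f‖_q )`, i.e. `f ↦ (f₁, …, fₙ)` is
an isomorphic embedding of `J^n_{p,q}(Ω) = n^{1/p} L_p(Ω) ∩ n^{1/q} L_q(Ω)` into
`L_p(Ω; ℓ_qⁿ)` with constants independent of `n`. -/
theorem stmt_9 (p q : ℝ) (hq : 1 ≤ q) (hqp : q ≤ p) :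
    ∃ C : ℝ, 1 ≤ C ∧
      ∀ (Ω : Type) (_ : MeasurableSpace Ω) (μ : Measure Ω), IsProbabilityMeasure μ →
        ∀ f : Ω → ℝ, Measurable f → Integrable (fun ω => |f ω| ^ p) μ →
          ∀ (n : ℕ), 1 ≤ n →
            ∀ g : Fin n → Ω → ℝ, (∀ k, Measurable (g k)) →
              iIndepFun g μ →
              (∀ k, Measure.map (g k) μ = Measure.map f μ) →
              C⁻¹ * max ((n : ℝ) ^ (1 / p) * (∫ ω, |f ω| ^ p ∂μ) ^ (1 / p))
                    ((n : ℝ) ^ (1 / q) * (∫ ω, |f ω| ^ q ∂μ) ^ (1 / q))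
                  ≤ (∫ ω, (∑ k, |g k ω| ^ q) ^ (p / q) ∂μ) ^ (1 / p) ∧
                (∫ ω, (∑ k, |g k ω| ^ q) ^ (p / q) ∂μ) ^ (1 / p)
                  ≤ C * max ((n : ℝ) ^ (1 / p) * (∫ ω, |f ω| ^ p ∂μ) ^ (1 / p))
                    ((n : ℝ) ^ (1 / q) * (∫ ω, |f ω| ^ q ∂μ) ^ (1 / q)) := by
  have hq0 : (0:ℝ) < q := lt_of_lt_of_le zero_lt_one hq
  have hp1 : (1:ℝ) ≤ p := le_trans hq hqp
  have hp0 : (0:ℝ) < p := lt_of_lt_of_le zero_lt_one hp1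
  set r : ℝ := p / q with hr_def
  have hr1 : 1 ≤ r := (one_le_div hq0).mpr hqp
  have hr0 : (0:ℝ) ≤ r := by linarith
  have h2r1 : (1:ℝ) ≤ 2 ^ r := Real.one_le_rpow one_le_two hr0
  have hKc1 : (1:ℝ) ≤ 2 * 2 ^ r := by linarith
  refine ⟨(2 * 2 ^ r) ^ (1 / q), Real.one_le_rpow hKc1 (by positivity), ?_⟩
  set C : ℝ := (2 * 2 ^ r) ^ (1 / q) with hC_def
  have hC1 : 1 ≤ C := Real.one_le_rpow hKc1 (by positivity)
  intro Ω mΩ μ hprob f hf hfint n hn g hg hindep hmap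
  -- basic data
  set a : ℝ := ∫ ω, |f ω| ^ q ∂μ with ha_def
  set b : ℝ := ∫ ω, |f ω| ^ p ∂μ with hb_def
  have ha0 : 0 ≤ a := integral_nonneg fun ω => Real.rpow_nonneg (abs_nonneg _) q
  have hb0 : 0 ≤ b := integral_nonneg fun ω => Real.rpow_nonneg (abs_nonneg _) p
  have hXmeas : ∀ k, Measurable fun ω => |g k ω| ^ q := fun k =>
    measurable_rpow_const' (hg k).abs hq0.le
  have hXnn : ∀ (k : Fin n) ω, 0 ≤ |g k ω| ^ q := fun k ω =>
    Real.rpow_nonneg (abs_nonneg _) q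
  have habs_meas : Measurable fun x : ℝ => |x| ^ q :=
    measurable_rpow_const' measurable_abs hq0.le
  have habs_meas_p : Measurable fun x : ℝ => |x| ^ p :=
    measurable_rpow_const' measurable_abs hp0.le
  have hXindep : iIndepFun (fun k ω => |g k ω| ^ q) μ := by
    have := hindep.comp (fun _ => fun x : ℝ => |x| ^ q) (fun _ => habs_meas)
    exact this
  have hqr : ∀ x : ℝ, (|x| ^ q) ^ r = |x| ^ p := by
    intro x
    rw [← Real.rpow_mul (abs_nonneg x)]
    congr 1
    rw [hr_def, mul_comm]
    exact div_mul_cancel₀ p (by linarith)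
  have hpush : ∀ (φ : ℝ → ℝ), Measurable φ →
      ∀ k, ∫ ω, φ (g k ω) ∂μ = ∫ ω, φ (f ω) ∂μ := by
    intro φ hφ k
    rw [← integral_map (hg k).aemeasurable hφ.aestronglyMeasurable, hmap k,
      integral_map hf.aemeasurable hφ.aestronglyMeasurable]
  have ha_eq : ∀ k, ∫ ω, |g k ω| ^ q ∂μ = a := fun k =>
    hpush (fun x => |x| ^ q) habs_meas k
  have hb_eq : ∀ k, ∫ ω, (|g k ω| ^ q) ^ r ∂μ = b := by
    intro k
    have h1 : ∫ ω, (|g k ω| ^ q) ^ r ∂μ = ∫ ω, |g k ω| ^ p ∂μ :=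
      integral_congr_ae (Filter.Eventually.of_forall fun ω => hqr (g k ω))
    rw [h1]
    exact hpush (fun x => |x| ^ p) habs_meas_p k
  have hint_k : ∀ k, Integrable (fun ω => (|g k ω| ^ q) ^ r) μ := by
    intro k
    have h1 : Integrable (fun x => |x| ^ p) (Measure.map f μ) := by
      rw [integrable_map_measure habs_meas_p.aestronglyMeasurable hf.aemeasurable]
      exact hfint
    rw [← hmap k] at h1
    rw [integrable_map_measure habs_meas_p.aestronglyMeasurable (hg k).aemeasurable] at h1
    have h2 : Integrable (fun ω => |g k ω| ^ p) μ := h1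
    refine h2.congr (Filter.Eventually.of_forall fun ω => ?_)
    exact (hqr (g k ω)).symm
  -- apply Rosenthal
  have hros := rosenthal_bound (μ := μ) hXmeas hXnn hXindep hr1 hint_k
  have hsum_a : (∑ k : Fin n, ∫ ω, |g k ω| ^ q ∂μ) = n * a := by
    rw [Finset.sum_congr rfl fun k _ => ha_eq k, Finset.sum_const, Finset.card_univ,
      Fintype.card_fin, nsmul_eq_mul]
  have hsum_b : (∑ k : Fin n, ∫ ω, (|g k ω| ^ q) ^ r ∂μ) = n * b := by
    rw [Finset.sum_congr rfl fun k _ => hb_eq k, Finset.sum_const, Finset.card_univ,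
      Fintype.card_fin, nsmul_eq_mul]
  rw [hsum_a, hsum_b] at hros
  set m : ℝ := ∫ ω, (∑ k, |g k ω| ^ q) ^ r ∂μ with hm_def
  have hSnn : ∀ ω, 0 ≤ ∑ k, |g k ω| ^ q := fun ω =>
    Finset.sum_nonneg fun k _ => hXnn k ω
  have hm0 : 0 ≤ m := integral_nonneg fun ω => Real.rpow_nonneg (hSnn ω) r
  have hSr_int : Integrable (fun ω => (∑ k, |g k ω| ^ q) ^ r) μ :=
    integrable_rpow_sum hXmeas hXnn hr1 hint_k Finset.univ
  have hna0 : (0:ℝ) ≤ n * a := mul_nonneg (Nat.cast_nonneg n) ha0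
  have hnb0 : (0:ℝ) ≤ n * b := mul_nonneg (Nat.cast_nonneg n) hb0
  -- lower bound (i) : n * b ≤ m
  have hlow_b : n * b ≤ m := by
    rw [← hsum_b, ← integral_finset_sum _ fun k _ => hint_k k]
    refine integral_mono (integrable_finset_sum _ fun k _ => hint_k k) hSr_int fun ω => ?_
    exact sum_rpow_le_rpow_sum' Finset.univ _ hr1 fun k _ => hXnn k ω
  -- lower bound (ii) : n * a ≤ m ^ (1/r)
  have hXk_int : ∀ k, Integrable (fun ω => |g k ω| ^ q) μ := by
    intro k
    refine Integrable.mono' ((integrable_const (1:ℝ)).add (hint_k k))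
      (hXmeas k).aestronglyMeasurable (Filter.Eventually.of_forall fun ω => ?_)
    rw [Real.norm_of_nonneg (hXnn k ω)]
    have := rpow_le_one_add_rpow (hXnn k ω) zero_le_one hr1
    rwa [Real.rpow_one] at this
  have hlow_a : n * a ≤ m ^ (1 / r) := by
    have hna_eq : n * a = ∫ ω, ∑ k, |g k ω| ^ q ∂μ := by
      rw [integral_finset_sum _ fun k _ => hXk_int k, hsum_a]
    rcases eq_or_lt_of_le hr1 with hre | hre
    · have : m = ∫ ω, ∑ k, |g k ω| ^ q ∂μ := by
        rw [hm_def]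
        refine integral_congr_ae (Filter.Eventually.of_forall fun ω => ?_)
        simp [← hre]
      rw [hna_eq, this, ← hre]
      norm_num
    · have hj := jensen_rpow (μ := μ)
        (Finset.measurable_sum _ fun k _ => hXmeas k) hSnn hre hSr_int
      rw [hna_eq]
      exact hj
  have hlow : max ((n:ℝ) ^ (1 / p) * b ^ (1 / p)) ((n:ℝ) ^ (1 / q) * a ^ (1 / q))
      ≤ m ^ (1 / p) := by
    refine max_le ?_ ?_
    · rw [← Real.mul_rpow (Nat.cast_nonneg n) hb0]
      exact Real.rpow_le_rpow hnb0 hlow_b (by positivity)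
    · rw [← Real.mul_rpow (Nat.cast_nonneg n) ha0]
      calc (n * a : ℝ) ^ (1 / q) ≤ (m ^ (1 / r)) ^ (1 / q) :=
            Real.rpow_le_rpow hna0 hlow_a (by positivity)
        _ = m ^ (1 / p) := by
            rw [← Real.rpow_mul hm0]
            congr 1
            rw [hr_def]
            field_simp
  have hmax0 : 0 ≤ max ((n:ℝ) ^ (1 / p) * b ^ (1 / p)) ((n:ℝ) ^ (1 / q) * a ^ (1 / q)) :=
    le_max_of_le_left (by positivity)
  constructor
  · -- lower bound
    calc C⁻¹ * max ((n:ℝ) ^ (1 / p) * b ^ (1 / p)) ((n:ℝ) ^ (1 / q) * a ^ (1 / q))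
        ≤ max ((n:ℝ) ^ (1 / p) * b ^ (1 / p)) ((n:ℝ) ^ (1 / q) * a ^ (1 / q)) :=
          mul_le_of_le_one_left hmax0 (inv_le_one_of_one_le₀ hC1)
      _ ≤ m ^ (1 / p) := hlow
  · -- upper bound
    have hmr : m ^ (1 / p)
        ≤ (max ((2 * 2 ^ r * (n * a)) ^ r) (2 * 2 ^ r * (n * b))) ^ (1 / p) :=
      Real.rpow_le_rpow hm0 hros (by positivity)
    have hmax_split : (max ((2 * 2 ^ r * (n * a)) ^ r) (2 * 2 ^ r * (n * b))) ^ (1 / p)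
        = max (((2 * 2 ^ r * (n * a)) ^ r) ^ (1 / p)) ((2 * 2 ^ r * (n * b)) ^ (1 / p)) :=
      max_rpow' (Real.rpow_nonneg (by positivity) r) (by positivity) (by positivity)
    have hterm1 : ((2 * 2 ^ r * (n * a)) ^ r) ^ (1 / p)
        ≤ C * ((n:ℝ) ^ (1 / q) * a ^ (1 / q)) := by
      have h1 : ((2 * 2 ^ r * (n * a)) ^ r) ^ (1 / p) = (2 * 2 ^ r * (n * a)) ^ (1 / q) := by
        rw [← Real.rpow_mul (by positivity : (0:ℝ) ≤ 2 * 2 ^ r * (n * a))]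
        congr 1
        rw [hr_def]
        field_simp
      rw [h1, Real.mul_rpow (by positivity : (0:ℝ) ≤ 2 * 2 ^ r) hna0,
        Real.mul_rpow (Nat.cast_nonneg n) ha0]
    have hterm2 : ((2 * 2 ^ r * (n * b)) ^ (1 / p))
        ≤ C * ((n:ℝ) ^ (1 / p) * b ^ (1 / p)) := by
      rw [Real.mul_rpow (by positivity : (0:ℝ) ≤ 2 * 2 ^ r) hnb0,
        Real.mul_rpow (Nat.cast_nonneg n) hb0]
      refine mul_le_mul_of_nonneg_right ?_ (by positivity)
      rw [hC_def]
      exact Real.rpow_le_rpow_of_exponent_le hKc1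
        (by rw [div_le_div_iff₀ hp0 hq0]; nlinarith)
    calc m ^ (1 / p)
        ≤ max (((2 * 2 ^ r * (n * a)) ^ r) ^ (1 / p)) ((2 * 2 ^ r * (n * b)) ^ (1 / p)) := by
          rw [← hmax_split]; exact hmr
      _ ≤ C * max ((n:ℝ) ^ (1 / p) * b ^ (1 / p)) ((n:ℝ) ^ (1 / q) * a ^ (1 / q)) := by
          refine max_le ?_ ?_
          · exact le_trans hterm1 (mul_le_mul_of_nonneg_left (le_max_right _ _)
              (by positivity))
          · exact le_trans hterm2 (mul_le_mul_of_nonneg_left (le_max_left _ _)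
              (by positivity))
end
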